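/- arXiv:2211.01529 — 7 statements merged into one kernel-verified Lean document; each statement's English description precedes it below -/
import Mathlib

section
/- Let λ > 0, 0 < q < ∞ and b ∈ ℝ. There exist constants c, C > 0 depending only on λ, q, b such that for every j₀ ∈ ℕ and every sequence (ξ_k)_{k≥0} of nonnegative reals, c · Σ_{j=j₀}^∞ 2^{-jλq}(1+j)^{bq} ξ_j^q ≤ Σ_{j=j₀}^∞ 2^{-jλq}(1+j)^{bq} (Σ_{k=j₀}^{j} ξ_k)^q ≤ C · Σ_{j=j₀}^∞ 2^{-jλq}(1+j)^{bq} ξ_j^q. -/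
open scoped ENNReal

/-- Summability of `r^m (1+m)^A` for `0 < r < 1`, `A ≥ 0`. -/
lemma hardy_aux_summable {r : ℝ} (h0 : 0 < r) (h1 : r < 1) {A : ℝ} (hA : 0 ≤ A) :
    Summable (fun m : ℕ => r ^ m * (1 + (m : ℝ)) ^ A) := by
  set N := ⌈A⌉₊ with hN
  have hbig : Summable (fun m : ℕ => (2:ℝ)^N * ((1 + (m:ℝ)^N) * r ^ m)) := by
    apply Summable.mul_left
    have hs1 : Summable (fun m : ℕ => r ^ m) := summable_geometric_of_lt_one h0.le h1
    have hs2 : Summable (fun m : ℕ => (m:ℝ)^N * r ^ m) :=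
      summable_pow_mul_geometric_of_norm_lt_one N
        (by rw [Real.norm_eq_abs, abs_of_pos h0]; exact h1)
    have := hs1.add hs2
    convert this using 2 with m
    · rfl
    ring
  apply Summable.of_nonneg_of_le _ _ hbig
  · intro m
    exact mul_nonneg (pow_nonneg h0.le m) (Real.rpow_nonneg (by positivity) A)
  · intro m
    have hb : (1:ℝ) ≤ 1 + (m:ℝ) := by have := Nat.cast_nonneg (α := ℝ) m; linarith
    have h2 : (1 + (m:ℝ)) ^ A ≤ (1 + (m:ℝ)) ^ (N:ℝ) :=
      Real.rpow_le_rpow_of_exponent_le hb (Nat.le_ceil A)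
    have h3 : (1 + (m:ℝ)) ^ (N:ℝ) = (1 + (m:ℝ)) ^ N := Real.rpow_natCast _ N
    have h4 : (1 + (m:ℝ)) ^ N ≤ (2:ℝ)^N * (1 + (m:ℝ)^N) := by
      have hmax : (1 + (m:ℝ)) ≤ 2 * max 1 (m:ℝ) := by
        have := le_max_left (1:ℝ) (m:ℝ)
        have := le_max_right (1:ℝ) (m:ℝ)
        linarith
      calc (1 + (m:ℝ)) ^ N ≤ (2 * max 1 (m:ℝ)) ^ N := by
            apply pow_le_pow_left₀ (by positivity) hmax
        _ = 2 ^ N * (max 1 (m:ℝ)) ^ N := by rw [mul_pow]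
        _ ≤ 2 ^ N * (1 + (m:ℝ)^N) := by
            gcongr
            rcases max_choice 1 (m:ℝ) with h | h <;> rw [h]
            · rw [one_pow]
              nlinarith [pow_nonneg (Nat.cast_nonneg m : (0:ℝ) ≤ m) N]
            · nlinarith [pow_nonneg (Nat.cast_nonneg m : (0:ℝ) ≤ m) N]
    calc r ^ m * (1 + (m:ℝ)) ^ A ≤ r ^ m * ((2:ℝ)^N * (1 + (m:ℝ)^N)) := by
          apply mul_le_mul_of_nonneg_left _ (by positivity)
          rw [← h3] at h4
          exact h2.trans h4
      _ = (2:ℝ)^N * ((1 + (m:ℝ)^N) * r ^ m) := by ring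

/-- Kernel bound: `(∑ a_i)^q ≤ D^q ∑ 2^{-e(i-j)} a_i^q` with `D = (1-2^{-e/q})⁻¹`. -/
lemma hardy_lemA {q e : ℝ} (hq : 0 < q) (he : 0 < e) (j : ℕ) (a : ℕ → ℝ)
    (ha : ∀ i, 0 ≤ a i) :
    (∑ i ∈ Finset.range (j+1), a i) ^ q ≤
      ((1 - (2:ℝ) ^ (-(e/q)))⁻¹) ^ q *
        ∑ i ∈ Finset.range (j+1), (2:ℝ) ^ (-e * ((i:ℝ) - (j:ℝ))) * a i ^ q := by
  set r : ℝ := (2:ℝ) ^ (-(e/q)) with hr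
  have hr0 : 0 < r := Real.rpow_pos_of_pos two_pos _
  have hr1 : r < 1 :=
    Real.rpow_lt_one_of_one_lt_of_neg one_lt_two (neg_lt_zero.mpr (by positivity))
  set D : ℝ := (1 - r)⁻¹ with hD
  have hD0 : 0 < D := inv_pos.mpr (by linarith)
  set T : ℝ := ∑ i ∈ Finset.range (j+1), (2:ℝ) ^ (-e * ((i:ℝ) - (j:ℝ))) * a i ^ q with hT
  have hTnn : 0 ≤ T := by
    apply Finset.sum_nonneg
    intro i _
    exact mul_nonneg (Real.rpow_nonneg two_pos.le _) (Real.rpow_nonneg (ha i) q)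
  have key : ∀ i ∈ Finset.range (j+1), a i ≤ r ^ (j - i) * T ^ (1/q) := by
    intro i hi
    have hij : i ≤ j := Nat.lt_succ_iff.mp (Finset.mem_range.mp hi)
    have h1 : (2:ℝ) ^ (-e * ((i:ℝ) - (j:ℝ))) * a i ^ q ≤ T := by
      apply Finset.single_le_sum (f := fun k : ℕ => (2:ℝ) ^ (-e * ((k:ℝ) - (j:ℝ))) * a k ^ q)
        (fun k _ => mul_nonneg (Real.rpow_nonneg two_pos.le _) (Real.rpow_nonneg (ha k) q)) hi
    have h2 : a i ^ q ≤ (2:ℝ) ^ (e * ((i:ℝ) - (j:ℝ))) * T := by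
      have h3 : (2:ℝ) ^ (e * ((i:ℝ) - (j:ℝ))) * ((2:ℝ) ^ (-e * ((i:ℝ) - (j:ℝ))) * a i ^ q)
          ≤ (2:ℝ) ^ (e * ((i:ℝ) - (j:ℝ))) * T :=
        mul_le_mul_of_nonneg_left h1 (Real.rpow_nonneg two_pos.le _)
      calc a i ^ q
          = (2:ℝ) ^ (e * ((i:ℝ) - (j:ℝ))) * ((2:ℝ) ^ (-e * ((i:ℝ) - (j:ℝ))) * a i ^ q) := by
            rw [← mul_assoc, ← Real.rpow_add two_pos]
            simp
        _ ≤ _ := h3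
    have h4 : a i ≤ ((2:ℝ) ^ (e * ((i:ℝ) - (j:ℝ))) * T) ^ (1/q) := by
      have := Real.rpow_le_rpow (Real.rpow_nonneg (ha i) q) h2 (by positivity : (0:ℝ) ≤ 1/q)
      rwa [← Real.rpow_mul (ha i), mul_one_div_cancel hq.ne', Real.rpow_one] at this
    refine h4.trans_eq ?_
    rw [Real.mul_rpow (Real.rpow_nonneg two_pos.le _) hTnn,
      ← Real.rpow_natCast r (j - i), hr, ← Real.rpow_mul two_pos.le,
      ← Real.rpow_mul two_pos.le]
    congr 2
    have : ((j - i : ℕ) : ℝ) = (j:ℝ) - (i:ℝ) := by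
      rw [Nat.cast_sub hij]
    rw [this]
    field_simp
    ring
  have hsum : (∑ i ∈ Finset.range (j+1), a i) ≤ D * T ^ (1/q) := by
    calc (∑ i ∈ Finset.range (j+1), a i)
        ≤ ∑ i ∈ Finset.range (j+1), r ^ (j - i) * T ^ (1/q) := Finset.sum_le_sum key
      _ = (∑ i ∈ Finset.range (j+1), r ^ (j - i)) * T ^ (1/q) := by
          rw [Finset.sum_mul]
      _ ≤ D * T ^ (1/q) := by
          apply mul_le_mul_of_nonneg_right _ (Real.rpow_nonneg hTnn _)
          have hrefl : (∑ i ∈ Finset.range (j+1), r ^ (j - i))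
              = ∑ i ∈ Finset.range (j+1), r ^ i := by
            have := Finset.sum_range_reflect (fun i => r ^ i) (j+1)
            simpa using this
          rw [hrefl, hD]
          rw [← tsum_geometric_of_lt_one hr0.le hr1]
          exact Summable.sum_le_tsum _ (fun k _ => pow_nonneg hr0.le k)
            (summable_geometric_of_lt_one hr0.le hr1)
  calc (∑ i ∈ Finset.range (j+1), a i) ^ q ≤ (D * T ^ (1/q)) ^ q :=
        Real.rpow_le_rpow (Finset.sum_nonneg fun i _ => ha i) hsum hq.le
    _ = D ^ q * T := by
        rw [Real.mul_rpow hD0.le (Real.rpow_nonneg hTnn _), ← Real.rpow_mul hTnn,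
          one_div_mul_cancel hq.ne', Real.rpow_one]

/-- Weight comparison, real-parametrized form. -/
lemma hardy_wcomp (l q b u m : ℝ) (hu : 0 ≤ u) (hm : 0 ≤ m) :
    (2:ℝ) ^ (-(u+m) * l * q) * (1+(u+m)) ^ (b*q) * (2:ℝ) ^ ((l*q/2) * m) ≤
    (2:ℝ) ^ (-u * l * q) * (1+u) ^ (b*q) *
      ((2:ℝ) ^ (-(l*q/2) * m) * (1+m) ^ |b*q|) := by
  have key : (1+(u+m)) ^ (b*q) ≤ (1+u) ^ (b*q) * (1+m) ^ |b*q| := by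
    rcases le_or_gt 0 (b*q) with hbq | hbq
    · rw [abs_of_nonneg hbq]
      have h1 : (1+(u+m)) ≤ (1+u) * (1+m) := by nlinarith
      calc (1+(u+m)) ^ (b*q) ≤ ((1+u) * (1+m)) ^ (b*q) :=
            Real.rpow_le_rpow (by linarith) h1 hbq
        _ = (1+u) ^ (b*q) * (1+m) ^ (b*q) :=
            Real.mul_rpow (by linarith) (by linarith)
    · calc (1+(u+m)) ^ (b*q) ≤ (1+u) ^ (b*q) :=
            Real.rpow_le_rpow_of_nonpos (by linarith) (by linarith) hbq.le
        _ ≤ (1+u) ^ (b*q) * (1+m) ^ |b*q| := by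
            apply le_mul_of_one_le_right (Real.rpow_nonneg (by linarith) _)
            exact Real.one_le_rpow (by linarith) (abs_nonneg _)
  have e1 : (2:ℝ) ^ (-(u+m) * l * q) * (1+(u+m)) ^ (b*q) * (2:ℝ) ^ ((l*q/2) * m)
      = (2:ℝ) ^ (-(u+m) * l * q + (l*q/2) * m) * (1+(u+m)) ^ (b*q) := by
    rw [Real.rpow_add two_pos]; ring
  have e2 : (2:ℝ) ^ (-u * l * q) * (1+u) ^ (b*q) *
        ((2:ℝ) ^ (-(l*q/2) * m) * (1+m) ^ |b*q|)
      = (2:ℝ) ^ (-u * l * q + -(l*q/2) * m) * ((1+u) ^ (b*q) * (1+m) ^ |b*q|) := by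
    rw [Real.rpow_add two_pos]; ring
  have e3 : -(u+m) * l * q + (l*q/2) * m = -u * l * q + -(l*q/2) * m := by ring
  rw [e1, e2, e3]
  exact mul_le_mul_of_nonneg_left key (Real.rpow_nonneg two_pos.le _)

/-- Weight comparison, natural-number indexed form. -/
lemma hardy_h5 (l q b : ℝ) (j₀ i j : ℕ) (hij : i ≤ j) :
    (2:ℝ) ^ (-(((j₀ + j : ℕ)):ℝ) * l * q) * (1 + ((j₀ + j : ℕ):ℝ)) ^ (b*q) *
      (2:ℝ) ^ (-(l*q/2) * ((i:ℝ) - (j:ℝ))) ≤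
    (2:ℝ) ^ (-(((j₀ + i : ℕ)):ℝ) * l * q) * (1 + ((j₀ + i : ℕ):ℝ)) ^ (b*q) *
      ((2:ℝ) ^ (-(l*q/2) * (((j - i : ℕ)):ℝ)) * (1 + ((j - i : ℕ):ℝ)) ^ |b*q|) := by
  have hm : ((j - i : ℕ):ℝ) = (j:ℝ) - (i:ℝ) := Nat.cast_sub hij
  have hje : ((j₀ + j : ℕ):ℝ) = ((j₀ + i : ℕ):ℝ) + ((j - i : ℕ):ℝ) := by
    rw [hm]; push_cast; ring
  have hexp : -(l*q/2) * ((i:ℝ) - (j:ℝ)) = (l*q/2) * (((j - i : ℕ)):ℝ) := by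
    rw [hm]; ring
  rw [hje, hexp]
  exact hardy_wcomp l q b _ _ (Nat.cast_nonneg _) (Nat.cast_nonneg _)

/-- Discrete Hardy-type inequality for partial sums with weights `2^{-jλq}(1+j)^{bq}`. -/
theorem hardy_partial_sums (l q b : ℝ) (hl : 0 < l) (hq : 0 < q) :
    ∃ c C : ℝ, 0 < c ∧ 0 < C ∧
      ∀ (j₀ : ℕ) (ξ : ℕ → ℝ), (∀ k, 0 ≤ ξ k) →
        (ENNReal.ofReal c *
            ∑' j : ℕ, ENNReal.ofReal
              ((2 : ℝ) ^ (-(((j₀ + j : ℕ) : ℝ)) * l * q) * (1 + ((j₀ + j : ℕ) : ℝ)) ^ (b * q) *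
                ξ (j₀ + j) ^ q) ≤
          ∑' j : ℕ, ENNReal.ofReal
              ((2 : ℝ) ^ (-(((j₀ + j : ℕ) : ℝ)) * l * q) * (1 + ((j₀ + j : ℕ) : ℝ)) ^ (b * q) *
                (∑ k ∈ Finset.Icc j₀ (j₀ + j), ξ k) ^ q)) ∧
        (∑' j : ℕ, ENNReal.ofReal
              ((2 : ℝ) ^ (-(((j₀ + j : ℕ) : ℝ)) * l * q) * (1 + ((j₀ + j : ℕ) : ℝ)) ^ (b * q) *
                (∑ k ∈ Finset.Icc j₀ (j₀ + j), ξ k) ^ q) ≤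
          ENNReal.ofReal C *
            ∑' j : ℕ, ENNReal.ofReal
              ((2 : ℝ) ^ (-(((j₀ + j : ℕ) : ℝ)) * l * q) * (1 + ((j₀ + j : ℕ) : ℝ)) ^ (b * q) *
                ξ (j₀ + j) ^ q)) := by
  have he : 0 < l * q / 2 := by positivity
  -- the geometric constant from the kernel lemma
  set D : ℝ := (1 - (2:ℝ) ^ (-(l * q / 2 / q)))⁻¹ with hDdef
  have hD0 : 0 < D := by
    rw [hDdef]
    have : (2:ℝ) ^ (-(l * q / 2 / q)) < 1 :=
      Real.rpow_lt_one_of_one_lt_of_neg one_lt_two (neg_lt_zero.mpr (by positivity))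
    exact inv_pos.mpr (by linarith)
  -- the tail kernel g and its sum G
  set g : ℕ → ℝ := fun m => (2:ℝ) ^ (-(l*q/2) * (m:ℝ)) * (1 + (m:ℝ)) ^ |b*q| with hgdef
  have hg0 : ∀ m, 0 ≤ g m := fun m =>
    mul_nonneg (Real.rpow_nonneg two_pos.le _) (Real.rpow_nonneg (by positivity) _)
  have hgsum : Summable g := by
    have h0 : (0:ℝ) < (2:ℝ) ^ (-(l*q/2)) := Real.rpow_pos_of_pos two_pos _
    have h1 : (2:ℝ) ^ (-(l*q/2)) < 1 :=
      Real.rpow_lt_one_of_one_lt_of_neg one_lt_two (neg_lt_zero.mpr he)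
    have := hardy_aux_summable h0 h1 (abs_nonneg (b*q))
    apply Summable.congr this
    intro m
    rw [hgdef]
    congr 1
    rw [← Real.rpow_natCast ((2:ℝ) ^ (-(l*q/2))) m, ← Real.rpow_mul two_pos.le]
  set G : ℝ := ∑' m, g m with hGdef
  have hG1 : 1 ≤ G := by
    have h0 : g 0 = 1 := by
      rw [hgdef]
      simp [Real.rpow_zero]
    have := Summable.le_tsum hgsum 0 (fun m _ => hg0 m)
    rw [h0] at this
    exact this
  have hGnn : 0 ≤ G := le_trans zero_le_one hG1
  have hC0 : 0 < D ^ q * G :=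
    mul_pos (Real.rpow_pos_of_pos hD0 q) (lt_of_lt_of_le one_pos hG1)
  refine ⟨1, D ^ q * G, one_pos, hC0, fun j₀ ξ hξ => ⟨?_, ?_⟩⟩
  · -- lower bound, c = 1
    rw [ENNReal.ofReal_one, one_mul]
    apply ENNReal.tsum_le_tsum
    intro j
    apply ENNReal.ofReal_le_ofReal
    have hmem : j₀ + j ∈ Finset.Icc j₀ (j₀ + j) :=
      Finset.mem_Icc.mpr ⟨Nat.le_add_right _ _, le_refl _⟩
    have hξS : ξ (j₀+j) ≤ ∑ k ∈ Finset.Icc j₀ (j₀+j), ξ k :=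
      Finset.single_le_sum (fun k _ => hξ k) hmem
    exact mul_le_mul_of_nonneg_left
      (Real.rpow_le_rpow (hξ _) hξS hq.le)
      (mul_nonneg (Real.rpow_nonneg two_pos.le _) (Real.rpow_nonneg (by positivity) _))
  · -- upper bound
    -- notation for the weights
    set w : ℕ → ℝ := fun n =>
      (2 : ℝ) ^ (-((n : ℕ) : ℝ) * l * q) * (1 + ((n : ℕ) : ℝ)) ^ (b * q) with hwdef
    have hwfold : ∀ n : ℕ,
        (2 : ℝ) ^ (-((n : ℕ) : ℝ) * l * q) * (1 + ((n : ℕ) : ℝ)) ^ (b * q) = w n :=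
      fun n => rfl
    have hwnn : ∀ n, 0 ≤ w n := fun n =>
      mul_nonneg (Real.rpow_nonneg two_pos.le _) (Real.rpow_nonneg (by positivity) _)
    simp only [hwfold]
    -- the shifted double-index summand
    set Ψ : ℕ → ℕ → ℝ≥0∞ := fun i j =>
      if i ≤ j then
        ENNReal.ofReal (D ^ q * ((w (j₀ + i) * ξ (j₀ + i) ^ q) * g (j - i)))
      else 0 with hΨdef
    -- pointwise bound
    have hpoint : ∀ j : ℕ,
        ENNReal.ofReal (w (j₀ + j) * (∑ k ∈ Finset.Icc j₀ (j₀ + j), ξ k) ^ q) ≤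
          ∑ i ∈ Finset.range (j+1),
            ENNReal.ofReal (D ^ q * ((w (j₀ + i) * ξ (j₀ + i) ^ q) * g (j - i))) := by
      intro j
      have hS : (∑ k ∈ Finset.Icc j₀ (j₀ + j), ξ k)
          = ∑ i ∈ Finset.range (j+1), ξ (j₀ + i) := by
        rw [← Finset.Ico_add_one_right_eq_Icc, Finset.sum_Ico_eq_sum_range]
        have hn : j₀ + j + 1 - j₀ = j + 1 := by omega
        rw [hn]
      have hlem := hardy_lemA hq he j (fun i => ξ (j₀ + i)) (fun i => hξ _)
      have hreal : w (j₀ + j) * (∑ k ∈ Finset.Icc j₀ (j₀ + j), ξ k) ^ q ≤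
          ∑ i ∈ Finset.range (j+1), D ^ q * ((w (j₀ + i) * ξ (j₀ + i) ^ q) * g (j - i)) := by
        rw [hS]
        calc w (j₀ + j) * (∑ i ∈ Finset.range (j+1), ξ (j₀ + i)) ^ q
            ≤ w (j₀ + j) * (D ^ q *
              ∑ i ∈ Finset.range (j+1),
                (2:ℝ) ^ (-(l*q/2) * ((i:ℝ) - (j:ℝ))) * ξ (j₀ + i) ^ q) := by
              apply mul_le_mul_of_nonneg_left _ (hwnn _)
              exact hlem
          _ = ∑ i ∈ Finset.range (j+1),
                D ^ q * ((w (j₀ + j) * (2:ℝ) ^ (-(l*q/2) * ((i:ℝ) - (j:ℝ)))) * ξ (j₀ + i) ^ q) := by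
              rw [Finset.mul_sum, Finset.mul_sum]
              apply Finset.sum_congr rfl
              intro i _
              ring
          _ ≤ ∑ i ∈ Finset.range (j+1),
                D ^ q * ((w (j₀ + i) * ξ (j₀ + i) ^ q) * g (j - i)) := by
              apply Finset.sum_le_sum
              intro i hi
              have hij : i ≤ j := Nat.lt_succ_iff.mp (Finset.mem_range.mp hi)
              apply mul_le_mul_of_nonneg_left _ (Real.rpow_nonneg hD0.le q)
              have h5 := hardy_h5 l q b j₀ i j hij
              calc (w (j₀ + j) * (2:ℝ) ^ (-(l*q/2) * ((i:ℝ) - (j:ℝ)))) * ξ (j₀ + i) ^ q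
                  ≤ (w (j₀ + i) * g (j - i)) * ξ (j₀ + i) ^ q := by
                    apply mul_le_mul_of_nonneg_right _ (Real.rpow_nonneg (hξ _) q)
                    exact h5
                _ = (w (j₀ + i) * ξ (j₀ + i) ^ q) * g (j - i) := by ring
      calc ENNReal.ofReal (w (j₀ + j) * (∑ k ∈ Finset.Icc j₀ (j₀ + j), ξ k) ^ q)
          ≤ ENNReal.ofReal
            (∑ i ∈ Finset.range (j+1), D ^ q * ((w (j₀ + i) * ξ (j₀ + i) ^ q) * g (j - i))) :=
            ENNReal.ofReal_le_ofReal hreal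
        _ = ∑ i ∈ Finset.range (j+1),
              ENNReal.ofReal (D ^ q * ((w (j₀ + i) * ξ (j₀ + i) ^ q) * g (j - i))) := by
            apply ENNReal.ofReal_sum_of_nonneg
            intro i _
            have : 0 ≤ (w (j₀ + i) * ξ (j₀ + i) ^ q) * g (j - i) :=
              mul_nonneg (mul_nonneg (hwnn _) (Real.rpow_nonneg (hξ _) q)) (hg0 _)
            exact mul_nonneg (Real.rpow_nonneg hD0.le q) this
    -- rewrite finite inner sums as tsums of Ψ
    have hfin : ∀ j : ℕ,
        (∑ i ∈ Finset.range (j+1),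
          ENNReal.ofReal (D ^ q * ((w (j₀ + i) * ξ (j₀ + i) ^ q) * g (j - i))))
        = ∑' i : ℕ, Ψ i j := by
      intro j
      rw [tsum_eq_sum (s := Finset.range (j+1))]
      · apply Finset.sum_congr rfl
        intro i hi
        have hij : i ≤ j := Nat.lt_succ_iff.mp (Finset.mem_range.mp hi)
        rw [hΨdef]
        simp only [if_pos hij]
      · intro i hi
        have : ¬ i ≤ j := by
          intro h
          exact hi (Finset.mem_range.mpr (Nat.lt_succ_of_le h))
        rw [hΨdef]
        simp only [if_neg this]
    -- evaluate the swapped sum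
    have hswap : ∑' i : ℕ, ∑' j : ℕ, Ψ i j =
        ∑' i : ℕ, ENNReal.ofReal (D ^ q * G) *
          ENNReal.ofReal (w (j₀ + i) * ξ (j₀ + i) ^ q) := by
      apply tsum_congr
      intro i
      have hshift : ∑' j : ℕ, Ψ i j = ∑' m : ℕ, Ψ i (m + i) := by
        have h := Summable.sum_add_tsum_nat_add' (f := fun j => Ψ i j) (k := i) ENNReal.summable
        have hz : ∑ j ∈ Finset.range i, Ψ i j = 0 := by
          apply Finset.sum_eq_zero
          intro j hj
          have : ¬ i ≤ j := Nat.not_le.mpr (Finset.mem_range.mp hj)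
          rw [hΨdef]
          simp only [if_neg this]
        rw [hz, zero_add] at h
        exact h.symm
      rw [hshift]
      have hΨval : ∀ m : ℕ, Ψ i (m + i)
          = ENNReal.ofReal (D ^ q * (w (j₀ + i) * ξ (j₀ + i) ^ q)) * ENNReal.ofReal (g m) := by
        intro m
        rw [hΨdef]
        have hle : i ≤ m + i := Nat.le_add_left _ _
        simp only [if_pos hle, Nat.add_sub_cancel]
        rw [← mul_assoc, ENNReal.ofReal_mul]
        exact mul_nonneg (Real.rpow_nonneg hD0.le q)
          (mul_nonneg (hwnn _) (Real.rpow_nonneg (hξ _) q))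
      calc ∑' m : ℕ, Ψ i (m + i)
          = ∑' m : ℕ, ENNReal.ofReal (D ^ q * (w (j₀ + i) * ξ (j₀ + i) ^ q)) *
              ENNReal.ofReal (g m) := tsum_congr hΨval
        _ = ENNReal.ofReal (D ^ q * (w (j₀ + i) * ξ (j₀ + i) ^ q)) *
              ∑' m : ℕ, ENNReal.ofReal (g m) := ENNReal.tsum_mul_left
        _ = ENNReal.ofReal (D ^ q * (w (j₀ + i) * ξ (j₀ + i) ^ q)) * ENNReal.ofReal G := by
            rw [hGdef, ENNReal.ofReal_tsum_of_nonneg hg0 hgsum]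
        _ = ENNReal.ofReal (D ^ q * G) * ENNReal.ofReal (w (j₀ + i) * ξ (j₀ + i) ^ q) := by
            rw [← ENNReal.ofReal_mul (mul_nonneg (Real.rpow_nonneg hD0.le q)
              (mul_nonneg (hwnn _) (Real.rpow_nonneg (hξ _) q))),
              ← ENNReal.ofReal_mul (mul_nonneg (Real.rpow_nonneg hD0.le q) hGnn)]
            congr 1
            ring
    -- assemble
    calc ∑' j : ℕ, ENNReal.ofReal (w (j₀ + j) * (∑ k ∈ Finset.Icc j₀ (j₀ + j), ξ k) ^ q)
        ≤ ∑' j : ℕ, ∑ i ∈ Finset.range (j+1),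
            ENNReal.ofReal (D ^ q * ((w (j₀ + i) * ξ (j₀ + i) ^ q) * g (j - i))) :=
          ENNReal.tsum_le_tsum hpoint
      _ = ∑' j : ℕ, ∑' i : ℕ, Ψ i j := tsum_congr hfin
      _ = ∑' i : ℕ, ∑' j : ℕ, Ψ i j := ENNReal.tsum_comm
      _ = ∑' i : ℕ, ENNReal.ofReal (D ^ q * G) *
            ENNReal.ofReal (w (j₀ + i) * ξ (j₀ + i) ^ q) := hswap
      _ = ENNReal.ofReal (D ^ q * G) *
            ∑' i : ℕ, ENNReal.ofReal (w (j₀ + i) * ξ (j₀ + i) ^ q) := ENNReal.tsum_mul_left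
end

section
/- Let λ > 0, 0 < q < ∞ and b ∈ ℝ. There exist constants c, C > 0 depending only on λ, q, b such that for every j₀ ∈ ℕ and every sequence (ξ_k)_{k≥0} of nonnegative reals, c · Σ_{j=j₀}^∞ 2^{jλq}(1+j)^{bq} ξ_j^q ≤ Σ_{j=j₀}^∞ 2^{jλq}(1+j)^{bq} (Σ_{k=j}^∞ ξ_k)^q ≤ C · Σ_{j=j₀}^∞ 2^{jλq}(1+j)^{bq} ξ_j^q, where both sides are allowed to be +∞ simultaneously. -/
set_option maxHeartbeats 1000000
open scoped ENNReal NNReal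
open Filter MeasureTheory

lemma tsum_rpow_le {x : ℕ → ℝ≥0∞} {q : ℝ} (hq : 0 < q) (hq1 : q ≤ 1) :
    (∑' m, x m) ^ q ≤ ∑' m, x m ^ q := by
  have hfin : ∀ s : Finset ℕ, (∑ m ∈ s, x m) ^ q ≤ ∑' m, x m ^ q := by
    intro s
    refine le_trans ?_ (ENNReal.sum_le_tsum s)
    induction s using Finset.cons_induction with
    | empty => simp [ENNReal.zero_rpow_of_pos hq]
    | cons a s ha ih =>
        rw [Finset.sum_cons, Finset.sum_cons]
        exact le_trans (ENNReal.rpow_add_le_add_rpow _ _ hq.le hq1)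
          (add_le_add le_rfl ih)
  have hcont : Continuous (fun y : ℝ≥0∞ => y ^ q) := ENNReal.continuous_rpow_const
  have h1 : Tendsto (fun s : Finset ℕ => (∑ m ∈ s, x m) ^ q) atTop
      (nhds ((∑' m, x m) ^ q)) :=
    (hcont.continuousAt).tendsto.comp ENNReal.summable.hasSum
  exact le_of_tendsto h1 (Filter.Eventually.of_forall hfin)


lemma key_jensen (l q : ℝ) (hl : 0 < l) (hq : 0 < q) :
    ∃ A : ℝ, 0 < A ∧ ∀ x : ℕ → ℝ≥0∞,
      (∑' m, x m) ^ q ≤ ENNReal.ofReal A *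
        ∑' m, ENNReal.ofReal (((2:ℝ) ^ (l * q / 2)) ^ m) * x m ^ q := by
  rcases le_or_gt q 1 with hq1 | hq1
  · refine ⟨1, one_pos, fun x => ?_⟩
    rw [ENNReal.ofReal_one, one_mul]
    refine (tsum_rpow_le hq hq1).trans (ENNReal.tsum_le_tsum fun m => ?_)
    conv_lhs => rw [← one_mul (x m ^ q)]
    refine mul_le_mul_left ?_ _
    rw [← ENNReal.ofReal_one]
    exact ENNReal.ofReal_le_ofReal
      (one_le_pow₀ (Real.one_le_rpow one_le_two (by positivity)))
  · -- q > 1 : Hölder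
    set p := Real.conjExponent q with hpdef
    have hpq : p.HolderConjugate q := (Real.HolderConjugate.conjExponent hq1).symm
    have hp1 : 1 < p := hpq.lt
    set δ := l / 2 with hδdef
    have hδ : 0 < δ := by positivity
    set r := (2:ℝ) ^ (-δ) with hrdef
    have hr0 : 0 < r := Real.rpow_pos_of_pos two_pos _
    have hr1 : r < 1 := Real.rpow_lt_one_of_one_lt_of_neg one_lt_two (by linarith)
    have hrp1 : r ^ p < 1 := Real.rpow_lt_one hr0.le hr1 (by linarith)
    have hrp0 : 0 ≤ r ^ p := (Real.rpow_pos_of_pos hr0 p).le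
    set Sp := (1 - r ^ p)⁻¹ with hSpdef
    have hSp : 0 < Sp := by
      rw [hSpdef]
      have h' : 0 < 1 - r ^ p := by linarith
      positivity
    refine ⟨Sp ^ (1/p * q), by positivity, fun x => ?_⟩
    set f : ℕ → ℝ≥0∞ := fun m => ENNReal.ofReal (r ^ m) with hfdef
    set g : ℕ → ℝ≥0∞ := fun m => ENNReal.ofReal (((2:ℝ) ^ δ) ^ m) * x m with hgdef
    have hfg : ∀ m, f m * g m = x m := by
      intro m
      rw [hfdef, hgdef, ← mul_assoc,
        ← ENNReal.ofReal_mul (by positivity : (0:ℝ) ≤ r ^ m), ← mul_pow, hrdef,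
        ← Real.rpow_add two_pos, neg_add_cancel, Real.rpow_zero, one_pow,
        ENNReal.ofReal_one, one_mul]
    have holder := ENNReal.lintegral_mul_le_Lp_mul_Lq Measure.count hpq
      (measurable_from_nat (f := f)).aemeasurable
      (measurable_from_nat (f := g)).aemeasurable
    rw [lintegral_count, lintegral_count, lintegral_count] at holder
    simp only [Pi.mul_apply] at holder
    simp only [hfg] at holder
    -- compute ∑' f^p
    have hfp : ∀ m : ℕ, f m ^ p = ENNReal.ofReal ((r ^ p) ^ m) := by
      intro m
      rw [hfdef, ENNReal.ofReal_rpow_of_pos (by positivity)]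
      congr 1
      rw [← Real.rpow_natCast r m, ← Real.rpow_mul hr0.le, mul_comm,
        Real.rpow_mul hr0.le, Real.rpow_natCast]
    have hsumfp : ∑' m, f m ^ p = ENNReal.ofReal Sp := by
      simp only [hfp]
      rw [← ENNReal.ofReal_tsum_of_nonneg (fun m => by positivity)
        (summable_geometric_of_lt_one hrp0 hrp1),
        tsum_geometric_of_lt_one hrp0 hrp1]
    rw [hsumfp] at holder
    -- raise to power q
    have h2 := ENNReal.rpow_le_rpow holder hq.le
    rw [ENNReal.mul_rpow_of_nonneg _ _ hq.le, ← ENNReal.rpow_mul, ← ENNReal.rpow_mul] at h2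
    simp only [one_div] at h2 ⊢
    rw [inv_mul_cancel₀ (by positivity : q ≠ 0), ENNReal.rpow_one] at h2
    refine h2.trans (le_of_eq ?_)
    congr 1
    · rw [ENNReal.ofReal_rpow_of_pos hSp]
    · congr 1 with m
      rw [hgdef, ENNReal.mul_rpow_of_nonneg _ _ hq.le,
        ENNReal.ofReal_rpow_of_pos (by positivity)]
      congr 2
      rw [← Real.rpow_natCast ((2:ℝ)^δ) m, ← Real.rpow_mul two_pos.le,
        ← Real.rpow_mul two_pos.le, ← Real.rpow_natCast ((2:ℝ)^(l*q/2)) m,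
        ← Real.rpow_mul two_pos.le]
      congr 1
      rw [hδdef]; ring


lemma core_ineq (b q : ℝ) (hq : 0 < q) (n m : ℕ) :
    (1 + (n:ℝ)) ^ (b * q) ≤
      (1 + (m:ℝ)) ^ (|b| * q) * (1 + (n:ℝ) + (m:ℝ)) ^ (b * q) := by
  have hn : (0:ℝ) < 1 + (n:ℝ) := by positivity
  have hm : (0:ℝ) < 1 + (m:ℝ) := by positivity
  have hnm : (0:ℝ) < 1 + (n:ℝ) + (m:ℝ) := by positivity
  rcases le_or_gt 0 b with hb | hb
  · rw [abs_of_nonneg hb]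
    calc (1 + (n:ℝ)) ^ (b * q) ≤ (1 + (n:ℝ) + (m:ℝ)) ^ (b * q) :=
          Real.rpow_le_rpow hn.le (by linarith [Nat.cast_nonneg (α := ℝ) m]) (by positivity)
      _ = 1 * (1 + (n:ℝ) + (m:ℝ)) ^ (b * q) := (one_mul _).symm
      _ ≤ _ := by
          refine mul_le_mul_of_nonneg_right ?_ (by positivity)
          calc (1:ℝ) = 1 ^ (b * q) := (Real.one_rpow _).symm
            _ ≤ (1 + (m:ℝ)) ^ (b * q) :=
                Real.rpow_le_rpow zero_le_one (by linarith [Nat.cast_nonneg (α := ℝ) m])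
                  (by positivity)
  · set s := -(b * q) with hsdef
    have hs : 0 < s := by rw [hsdef]; nlinarith
    have habs : |b| * q = s := by rw [abs_of_neg hb, hsdef]; ring
    have hbq : b * q = -s := by rw [hsdef]; ring
    rw [habs, hbq, Real.rpow_neg hn.le, Real.rpow_neg hnm.le]
    have h1 : (1 + (n:ℝ) + (m:ℝ)) ^ s ≤ (1 + (m:ℝ)) ^ s * (1 + (n:ℝ)) ^ s := by
      rw [← Real.mul_rpow hm.le hn.le]
      refine Real.rpow_le_rpow hnm.le ?_ hs.le
      nlinarith [Nat.cast_nonneg (α := ℝ) n, Nat.cast_nonneg (α := ℝ) m]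
    have hA : (0:ℝ) < (1 + (n:ℝ)) ^ s := by positivity
    have hD : (0:ℝ) < (1 + (n:ℝ) + (m:ℝ)) ^ s := by positivity
    have hC : (0:ℝ) < (1 + (m:ℝ)) ^ s := by positivity
    rw [inv_eq_one_div, inv_eq_one_div, ← div_eq_mul_one_div, div_le_div_iff₀ hA hD]
    nlinarith

lemma weight_ineq (l q b : ℝ) (hl : 0 < l) (hq : 0 < q) (n m : ℕ) :
    ((2:ℝ) ^ ((n:ℝ) * l * q) * (1 + (n:ℝ)) ^ (b * q)) * ((2:ℝ) ^ (l * q / 2)) ^ m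
      ≤ (((2:ℝ) ^ (-(l * q / 2))) ^ m * (1 + (m:ℝ)) ^ (|b| * q)) *
        ((2:ℝ) ^ ((((n + m : ℕ)):ℝ) * l * q) * (1 + ((n + m : ℕ):ℝ)) ^ (b * q)) := by
  have h2eq : ((2:ℝ) ^ (-(l * q / 2))) ^ m * (2:ℝ) ^ ((((n + m : ℕ)):ℝ) * l * q)
      = (2:ℝ) ^ ((n:ℝ) * l * q) * ((2:ℝ) ^ (l * q / 2)) ^ m := by
    rw [← Real.rpow_natCast ((2:ℝ) ^ (-(l * q / 2))) m, ← Real.rpow_mul two_pos.le,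
      ← Real.rpow_natCast ((2:ℝ) ^ (l * q / 2)) m, ← Real.rpow_mul two_pos.le,
      ← Real.rpow_add two_pos, ← Real.rpow_add two_pos]
    congr 1
    push_cast
    ring
  have hcore := core_ineq b q hq n m
  have hP : (0:ℝ) < (2:ℝ) ^ ((n:ℝ) * l * q) * ((2:ℝ) ^ (l * q / 2)) ^ m := by positivity
  calc ((2:ℝ) ^ ((n:ℝ) * l * q) * (1 + (n:ℝ)) ^ (b * q)) * ((2:ℝ) ^ (l * q / 2)) ^ m
      = ((2:ℝ) ^ ((n:ℝ) * l * q) * ((2:ℝ) ^ (l * q / 2)) ^ m) * (1 + (n:ℝ)) ^ (b * q) := by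
        ring
    _ ≤ ((2:ℝ) ^ ((n:ℝ) * l * q) * ((2:ℝ) ^ (l * q / 2)) ^ m) *
          ((1 + (m:ℝ)) ^ (|b| * q) * (1 + (n:ℝ) + (m:ℝ)) ^ (b * q)) :=
        mul_le_mul_of_nonneg_left hcore hP.le
    _ = _ := by
        rw [← h2eq]
        push_cast
        ring

lemma rho_summable (θ s : ℝ) (hθ : 0 < θ) (hs : 0 ≤ s) :
    Summable (fun m : ℕ => ((2:ℝ) ^ (-θ)) ^ m * (1 + (m:ℝ)) ^ s) := by
  set r := (2:ℝ) ^ (-θ) with hrdef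
  have hr0 : 0 < r := Real.rpow_pos_of_pos two_pos _
  have hr1 : r < 1 := Real.rpow_lt_one_of_one_lt_of_neg one_lt_two (by linarith)
  obtain ⟨N, hsN⟩ : ∃ N : ℕ, s ≤ (N:ℝ) := ⟨⌈s⌉₊, Nat.le_ceil s⟩
  have hg0 : Summable (fun n : ℕ => (n:ℝ) ^ N * r ^ n) :=
    summable_pow_mul_geometric_of_norm_lt_one N
      (by rw [Real.norm_eq_abs, abs_of_pos hr0]; exact hr1)
  have hg1 : Summable (fun m : ℕ => ((m + 1 : ℕ):ℝ) ^ N * r ^ (m + 1)) :=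
    (summable_nat_add_iff 1).2 hg0
  have hg2 : Summable (fun m : ℕ => r⁻¹ * (((m + 1 : ℕ):ℝ) ^ N * r ^ (m + 1))) :=
    hg1.mul_left _
  refine Summable.of_nonneg_of_le (fun m => by positivity) (fun m => ?_) hg2
  have hcast : ((m + 1 : ℕ):ℝ) = 1 + (m:ℝ) := by push_cast; ring
  have heq : r⁻¹ * (((m + 1 : ℕ):ℝ) ^ N * r ^ (m + 1)) = (1 + (m:ℝ)) ^ N * r ^ m := by
    rw [pow_succ, hcast]
    calc r⁻¹ * ((1 + (m:ℝ)) ^ N * (r ^ m * r))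
        = (1 + (m:ℝ)) ^ N * r ^ m * (r⁻¹ * r) := by ring
      _ = (1 + (m:ℝ)) ^ N * r ^ m := by rw [inv_mul_cancel₀ hr0.ne']; ring
  rw [heq]
  have h1 : (1 + (m:ℝ)) ^ s ≤ (1 + (m:ℝ)) ^ (N:ℝ) :=
    Real.rpow_le_rpow_of_exponent_le (by linarith [Nat.cast_nonneg (α := ℝ) m])
      hsN
  rw [Real.rpow_natCast] at h1
  calc r ^ m * (1 + (m:ℝ)) ^ s ≤ r ^ m * (1 + (m:ℝ)) ^ N :=
        mul_le_mul_of_nonneg_left h1 (by positivity)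
    _ = (1 + (m:ℝ)) ^ N * r ^ m := by ring


/-- Dual discrete Hardy-type inequality for tail sums with weights `2^{jλq}(1+j)^{bq}`.
Both sides may simultaneously be `+∞` (the sums are taken in `ℝ≥0∞`). -/
theorem hardy_tail_sums (l q b : ℝ) (hl : 0 < l) (hq : 0 < q) :
    ∃ c C : ℝ, 0 < c ∧ 0 < C ∧
      ∀ (j₀ : ℕ) (ξ : ℕ → ℝ≥0),
        (ENNReal.ofReal c *
            ∑' j : ℕ,
              ENNReal.ofReal
                  ((2 : ℝ) ^ (((j₀ + j : ℕ) : ℝ) * l * q) * (1 + ((j₀ + j : ℕ) : ℝ)) ^ (b * q)) *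
                (ξ (j₀ + j) : ℝ≥0∞) ^ q ≤
          ∑' j : ℕ,
              ENNReal.ofReal
                  ((2 : ℝ) ^ (((j₀ + j : ℕ) : ℝ) * l * q) * (1 + ((j₀ + j : ℕ) : ℝ)) ^ (b * q)) *
                (∑' k : ℕ, (ξ (j₀ + j + k) : ℝ≥0∞)) ^ q) ∧
        (∑' j : ℕ,
              ENNReal.ofReal
                  ((2 : ℝ) ^ (((j₀ + j : ℕ) : ℝ) * l * q) * (1 + ((j₀ + j : ℕ) : ℝ)) ^ (b * q)) *
                (∑' k : ℕ, (ξ (j₀ + j + k) : ℝ≥0∞)) ^ q ≤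
          ENNReal.ofReal C *
            ∑' j : ℕ,
              ENNReal.ofReal
                  ((2 : ℝ) ^ (((j₀ + j : ℕ) : ℝ) * l * q) * (1 + ((j₀ + j : ℕ) : ℝ)) ^ (b * q)) *
                (ξ (j₀ + j) : ℝ≥0∞) ^ q) := by
  obtain ⟨A, hA, hkey⟩ := key_jensen l q hl hq
  have hρsum : Summable (fun m : ℕ => ((2:ℝ) ^ (-(l * q / 2))) ^ m * (1 + (m:ℝ)) ^ (|b| * q)) :=
    rho_summable (l * q / 2) (|b| * q) (by positivity) (by positivity)
  set K := ∑' m : ℕ, ((2:ℝ) ^ (-(l * q / 2))) ^ m * (1 + (m:ℝ)) ^ (|b| * q) with hKdef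
  have hK : 0 < K := by
    refine Summable.tsum_pos hρsum (fun i => by positivity) 0 ?_
    positivity
  refine ⟨1, A * K, one_pos, by positivity, fun j₀ ξ => ⟨?_, ?_⟩⟩
  · -- lower bound
    rw [ENNReal.ofReal_one, one_mul]
    refine ENNReal.tsum_le_tsum fun j => mul_le_mul_right (ENNReal.rpow_le_rpow ?_ hq.le) _
    have h0 := ENNReal.le_tsum (f := fun k => (ξ (j₀ + j + k) : ℝ≥0∞)) 0
    simpa using h0
  · -- upper bound
    set W : ℕ → ℝ≥0∞ :=
      fun n => ENNReal.ofReal ((2:ℝ) ^ ((n:ℝ) * l * q) * (1 + (n:ℝ)) ^ (b * q)) with hWdef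
    set G : ℕ → ℝ≥0∞ := fun j => W (j₀ + j) * (ξ (j₀ + j) : ℝ≥0∞) ^ q with hGdef
    show ∑' j : ℕ, W (j₀ + j) * (∑' k : ℕ, (ξ (j₀ + j + k) : ℝ≥0∞)) ^ q ≤
      ENNReal.ofReal (A * K) * ∑' j : ℕ, G j
    calc ∑' j : ℕ, W (j₀ + j) * (∑' k : ℕ, (ξ (j₀ + j + k) : ℝ≥0∞)) ^ q
        ≤ ∑' j : ℕ, W (j₀ + j) * (ENNReal.ofReal A *
            ∑' m : ℕ, ENNReal.ofReal (((2:ℝ) ^ (l * q / 2)) ^ m) * (ξ (j₀ + j + m) : ℝ≥0∞) ^ q) :=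
          ENNReal.tsum_le_tsum fun j =>
            mul_le_mul_right (hkey fun m => (ξ (j₀ + j + m) : ℝ≥0∞)) _
      _ = ENNReal.ofReal A * ∑' j : ℕ, ∑' m : ℕ,
            (W (j₀ + j) * ENNReal.ofReal (((2:ℝ) ^ (l * q / 2)) ^ m)) *
              (ξ (j₀ + j + m) : ℝ≥0∞) ^ q := by
          rw [← ENNReal.tsum_mul_left]
          refine tsum_congr fun j => ?_
          rw [← mul_assoc, ← ENNReal.tsum_mul_left, ← ENNReal.tsum_mul_left]
          exact tsum_congr fun m => by ring
      _ ≤ ENNReal.ofReal A * ∑' j : ℕ, ∑' m : ℕ,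
            ENNReal.ofReal (((2:ℝ) ^ (-(l * q / 2))) ^ m * (1 + (m:ℝ)) ^ (|b| * q)) *
              G (j + m) := by
          refine mul_le_mul_right
            (ENNReal.tsum_le_tsum fun j => ENNReal.tsum_le_tsum fun m => ?_) _
          have hG : G (j + m) = W (j₀ + j + m) * (ξ (j₀ + j + m) : ℝ≥0∞) ^ q := by
            simp only [hGdef]
            rw [← add_assoc]
          rw [hG, ← mul_assoc]
          refine mul_le_mul_left ?_ _
          rw [hWdef, ← ENNReal.ofReal_mul (by positivity), ← ENNReal.ofReal_mul (by positivity)]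
          exact ENNReal.ofReal_le_ofReal (weight_ineq l q b hl hq (j₀ + j) m)
      _ = ENNReal.ofReal A * ∑' m : ℕ,
            ENNReal.ofReal (((2:ℝ) ^ (-(l * q / 2))) ^ m * (1 + (m:ℝ)) ^ (|b| * q)) *
              ∑' j : ℕ, G (j + m) := by
          congr 1
          rw [ENNReal.tsum_comm]
          exact tsum_congr fun m => ENNReal.tsum_mul_left
      _ ≤ ENNReal.ofReal A * ∑' m : ℕ,
            ENNReal.ofReal (((2:ℝ) ^ (-(l * q / 2))) ^ m * (1 + (m:ℝ)) ^ (|b| * q)) *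
              ∑' j : ℕ, G j := by
          refine mul_le_mul_right (ENNReal.tsum_le_tsum fun m => mul_le_mul_right ?_ _) _
          exact ENNReal.tsum_comp_le_tsum_of_injective (add_left_injective m) G
      _ = ENNReal.ofReal (A * K) * ∑' j : ℕ, G j := by
          rw [ENNReal.tsum_mul_right, ← mul_assoc,
            ← ENNReal.ofReal_tsum_of_nonneg (fun m => by positivity) hρsum,
            ← ENNReal.ofReal_mul hA.le]
end

section
/- Let b > 0, 0 < q < ∞ and 0 < r < ∞. There exist constants c, C > 0 depending only on b, q, r such that for every sequence (a_ν)_{ν≥0} of nonnegative reals: c · (Σ_{j=0}^∞ 2^{jbr} (Σ_{ν=2^j−1}^{2^{j+1}−2} a_ν^q)^{r/q})^{1/r} ≤ (Σ_{j=0}^∞ 2^{jbr} (Σ_{ν=2^j−1}^{∞} a_ν^q)^{r/q})^{1/r} ≤ C · (Σ_{j=0}^∞ 2^{jbr} (Σ_{ν=2^j−1}^{2^{j+1}−2} a_ν^q)^{r/q})^{1/r}, where both sides may simultaneously be infinite. -/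
open scoped ENNReal NNReal

lemma block_partial (f : ℕ → ℝ≥0∞) (j N : ℕ) :
    ∑ k ∈ Finset.range N, ∑ ν ∈ Finset.Icc (2 ^ (j+k) - 1) (2 ^ (j+k+1) - 2), f ν
      = ∑ ν ∈ Finset.range (2 ^ (j+N) - 2 ^ j), f (2 ^ j - 1 + ν) := by
  induction N with
  | zero => simp
  | succ N ih =>
      simp only [← add_assoc]
      rw [Finset.sum_range_succ, ih]
      have h1 : (1:ℕ) ≤ 2 ^ j := Nat.one_le_two_pow
      have h2 : 2 ^ j ≤ 2 ^ (j+N) := Nat.pow_le_pow_right (by norm_num) (by omega)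
      have h3 : 2 ^ (j+N+1) = 2 * 2 ^ (j+N) := by ring
      rw [Finset.range_eq_Ico, Finset.range_eq_Ico,
        ← Finset.sum_Ico_consecutive _ (Nat.zero_le (2^(j+N)-2^j))
          (by omega : 2^(j+N)-2^j ≤ 2^(j+N+1)-2^j), ← Finset.range_eq_Ico]
      congr 1
      rw [show Finset.Icc (2^(j+N)-1) (2^(j+N+1)-2)
            = Finset.Ico (2^(j+N)-1) (2^(j+N+1)-1) by
          rw [show (2:ℕ)^(j+N+1)-1 = (2^(j+N+1)-2)+1 by omega, Finset.Ico_add_one_right_eq_Icc]]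
      rw [Finset.sum_Ico_eq_sum_range, Finset.sum_Ico_eq_sum_range]
      rw [show 2^(j+N+1)-1-(2^(j+N)-1) = (2^(j+N+1)-2^j)-(2^(j+N)-2^j) by omega]
      exact Finset.sum_congr rfl fun i _ => by congr 1; omega

lemma tail_eq (f : ℕ → ℝ≥0∞) (j : ℕ) :
    ∑' ν : ℕ, f (2 ^ j - 1 + ν)
      = ∑' k : ℕ, ∑ ν ∈ Finset.Icc (2 ^ (j+k) - 1) (2 ^ (j+k+1) - 2), f ν := by
  have hN : Filter.Tendsto (fun N => 2 ^ (j+N) - 2 ^ j) Filter.atTop Filter.atTop := by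
    apply Filter.tendsto_atTop_mono (fun N => ?_) Filter.tendsto_id
    have hN2 := Nat.lt_two_pow_self (n := N)
    have h1 : (1:ℕ) ≤ 2 ^ j := Nat.one_le_two_pow
    have h2 : 2 ^ (j+N) = 2 ^ j * 2 ^ N := pow_add 2 j N
    have h4 : 2 ^ j * (2 ^ N - 1) ≤ 2 ^ j * 2 ^ N - 2 ^ j := by
      rw [Nat.mul_sub, mul_one]
    have h5 : 2 ^ N - 1 ≤ 2 ^ j * (2 ^ N - 1) := Nat.le_mul_of_pos_left _ (by omega)
    simp only [Function.id_def]
    omega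
  rw [ENNReal.tsum_eq_iSup_nat' hN, ENNReal.tsum_eq_iSup_nat]
  exact iSup_congr fun N => (block_partial f j N).symm

-- geometric sum finiteness
lemma geom_ne_top {δ : ℝ} (hδ : 0 < δ) :
    (∑' k : ℕ, ENNReal.ofReal ((2:ℝ) ^ (-(k:ℝ) * δ))) ≠ ∞ := by
  have he : ∀ k : ℕ, ENNReal.ofReal ((2:ℝ) ^ (-(k:ℝ) * δ))
      = (ENNReal.ofReal ((2:ℝ) ^ (-δ))) ^ k := by
    intro k
    rw [← ENNReal.ofReal_pow (by positivity)]
    congr 1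
    rw [← Real.rpow_natCast ((2:ℝ) ^ (-δ)) k, ← Real.rpow_mul (by norm_num)]
    ring_nf
  simp only [he]
  rw [ENNReal.tsum_geometric]
  rw [ENNReal.inv_ne_top]
  have hlt : ENNReal.ofReal ((2:ℝ) ^ (-δ)) < 1 := by
    rw [ENNReal.ofReal_lt_one]
    exact Real.rpow_lt_one_of_one_lt_of_neg (by norm_num) (by linarith)
  simp only [ne_eq, tsub_eq_zero_iff_le, not_le]
  exact hlt

lemma hardy (s t : ℝ) (hs : 0 < s) (ht : 0 < t) :
    ∃ D : ℝ≥0∞, D ≠ ∞ ∧ ∀ u : ℕ → ℝ≥0∞,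
      ∑' j : ℕ, ENNReal.ofReal ((2:ℝ) ^ ((j:ℝ) * t)) * (∑' k : ℕ, u (j + k)) ^ s
        ≤ D * ∑' j : ℕ, ENNReal.ofReal ((2:ℝ) ^ ((j:ℝ) * t)) * u j ^ s := by
  set δ : ℝ := t / (2 * s) with hδdef
  have hδ : 0 < δ := by positivity
  have hδs : δ * s = t / 2 := by
    rw [hδdef]; field_simp
  set K : ℝ≥0∞ := ∑' k : ℕ, ENNReal.ofReal ((2:ℝ) ^ (-(k:ℝ) * δ)) with hKdef
  have hK : K ≠ ∞ := geom_ne_top hδ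
  set K2 : ℝ≥0∞ := ∑' k : ℕ, ENNReal.ofReal ((2:ℝ) ^ (-(k:ℝ) * (t/2))) with hK2def
  have hK2 : K2 ≠ ∞ := geom_ne_top (by positivity)
  refine ⟨K ^ s * K2, ENNReal.mul_ne_top (ENNReal.rpow_ne_top_of_nonneg hs.le hK) hK2, ?_⟩
  intro u
  set S : ℝ≥0∞ := ∑' j : ℕ, ENNReal.ofReal ((2:ℝ) ^ ((j:ℝ) * t)) * u j ^ s with hSdef
  -- pointwise bound on the tail
  have key : ∀ j : ℕ, (∑' k : ℕ, u (j + k)) ^ s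
      ≤ K ^ s * ∑' k : ℕ, ENNReal.ofReal ((2:ℝ) ^ ((k:ℝ) * (t/2))) * u (j + k) ^ s := by
    intro j
    set M : ℝ≥0∞ := ⨆ k : ℕ, ENNReal.ofReal ((2:ℝ) ^ ((k:ℝ) * δ)) * u (j + k) with hMdef
    have hTM : (∑' k : ℕ, u (j + k)) ≤ K * M := by
      have : ∀ k : ℕ, u (j + k) ≤ ENNReal.ofReal ((2:ℝ) ^ (-(k:ℝ) * δ)) * M := by
        intro k
        calc u (j + k)
            = (ENNReal.ofReal ((2:ℝ) ^ (-(k:ℝ) * δ)) * ENNReal.ofReal ((2:ℝ) ^ ((k:ℝ) * δ)))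
              * u (j + k) := by
              rw [← ENNReal.ofReal_mul (by positivity), ← Real.rpow_add (by norm_num)]
              norm_num
          _ = ENNReal.ofReal ((2:ℝ) ^ (-(k:ℝ) * δ))
              * (ENNReal.ofReal ((2:ℝ) ^ ((k:ℝ) * δ)) * u (j + k)) := mul_assoc _ _ _
          _ ≤ ENNReal.ofReal ((2:ℝ) ^ (-(k:ℝ) * δ)) * M := by
              rw [hMdef]
              exact mul_le_mul_right (le_iSup (fun i : ℕ => ENNReal.ofReal ((2:ℝ) ^ ((i:ℝ) * δ)) * u (j + i)) k) _
      calc (∑' k : ℕ, u (j + k))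
          ≤ ∑' k : ℕ, ENNReal.ofReal ((2:ℝ) ^ (-(k:ℝ) * δ)) * M := ENNReal.tsum_le_tsum this
        _ = K * M := by rw [ENNReal.tsum_mul_right]
    set V : ℝ≥0∞ := ∑' k : ℕ, ENNReal.ofReal ((2:ℝ) ^ ((k:ℝ) * (t/2))) * u (j + k) ^ s with hVdef
    have hMV : M ^ s ≤ V := by
      have hM : M ≤ V ^ (1/s) := by
        apply iSup_le
        intro k
        have hterm : (ENNReal.ofReal ((2:ℝ) ^ ((k:ℝ) * δ)) * u (j + k)) ^ s
            = ENNReal.ofReal ((2:ℝ) ^ ((k:ℝ) * (t/2))) * u (j + k) ^ s := by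
          rw [ENNReal.mul_rpow_of_nonneg _ _ hs.le, ENNReal.ofReal_rpow_of_pos (by positivity),
            ← Real.rpow_mul (by norm_num : (0:ℝ) ≤ 2), mul_assoc, hδs]
        have h1 : (ENNReal.ofReal ((2:ℝ) ^ ((k:ℝ) * δ)) * u (j + k)) ^ s ≤ V := by
          rw [hterm, hVdef]; exact ENNReal.le_tsum k
        calc ENNReal.ofReal ((2:ℝ) ^ ((k:ℝ) * δ)) * u (j + k)
            = ((ENNReal.ofReal ((2:ℝ) ^ ((k:ℝ) * δ)) * u (j + k)) ^ s) ^ (1/s) := by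
              rw [← ENNReal.rpow_mul, mul_one_div, div_self hs.ne', ENNReal.rpow_one]
          _ ≤ V ^ (1/s) := ENNReal.rpow_le_rpow h1 (by positivity)
      calc M ^ s ≤ (V ^ (1/s)) ^ s := ENNReal.rpow_le_rpow hM hs.le
        _ = V := by rw [← ENNReal.rpow_mul, one_div, inv_mul_cancel₀ hs.ne', ENNReal.rpow_one]
    calc (∑' k : ℕ, u (j + k)) ^ s ≤ (K * M) ^ s := ENNReal.rpow_le_rpow hTM hs.le
      _ = K ^ s * M ^ s := ENNReal.mul_rpow_of_nonneg _ _ hs.le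
      _ ≤ K ^ s * V := mul_le_mul_right hMV _
  have hw : ∀ j k : ℕ, ENNReal.ofReal ((2:ℝ) ^ ((j:ℝ) * t)) * ENNReal.ofReal ((2:ℝ) ^ ((k:ℝ) * (t/2)))
      = ENNReal.ofReal ((2:ℝ) ^ (-(k:ℝ) * (t/2))) * ENNReal.ofReal ((2:ℝ) ^ ((((j+k):ℕ):ℝ) * t)) := by
    intro j k
    rw [← ENNReal.ofReal_mul (by positivity), ← ENNReal.ofReal_mul (by positivity),
      ← Real.rpow_add (by norm_num : (0:ℝ) < 2), ← Real.rpow_add (by norm_num : (0:ℝ) < 2)]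
    congr 1
    push_cast
    ring
  calc ∑' j : ℕ, ENNReal.ofReal ((2:ℝ) ^ ((j:ℝ) * t)) * (∑' k : ℕ, u (j + k)) ^ s
      ≤ ∑' j : ℕ, ENNReal.ofReal ((2:ℝ) ^ ((j:ℝ) * t))
          * (K ^ s * ∑' k : ℕ, ENNReal.ofReal ((2:ℝ) ^ ((k:ℝ) * (t/2))) * u (j + k) ^ s) :=
        ENNReal.tsum_le_tsum fun j => mul_le_mul_right (key j) _
    _ = K ^ s * ∑' j : ℕ, ∑' k : ℕ,
          ENNReal.ofReal ((2:ℝ) ^ (-(k:ℝ) * (t/2)))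
            * (ENNReal.ofReal ((2:ℝ) ^ ((((j+k):ℕ):ℝ) * t)) * u (j + k) ^ s) := by
        rw [← ENNReal.tsum_mul_left]
        refine tsum_congr fun j => ?_
        rw [← mul_assoc, mul_comm _ (K ^ s), mul_assoc, ← ENNReal.tsum_mul_left]
        congr 1
        refine tsum_congr fun k => ?_
        rw [← mul_assoc, hw j k, mul_assoc]
    _ = K ^ s * ∑' k : ℕ, ENNReal.ofReal ((2:ℝ) ^ (-(k:ℝ) * (t/2)))
          * ∑' j : ℕ, ENNReal.ofReal ((2:ℝ) ^ ((((j+k):ℕ):ℝ) * t)) * u (j + k) ^ s := by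
        rw [ENNReal.tsum_comm]
        congr 1
        exact tsum_congr fun k => (ENNReal.tsum_mul_left).symm ▸ rfl
    _ ≤ K ^ s * ∑' k : ℕ, ENNReal.ofReal ((2:ℝ) ^ (-(k:ℝ) * (t/2))) * S := by
        refine mul_le_mul_right (ENNReal.tsum_le_tsum fun k => mul_le_mul_right ?_ _) _
        exact ENNReal.tsum_comp_le_tsum_of_injective (add_left_injective k)
          (fun m => ENNReal.ofReal ((2:ℝ) ^ ((m:ℝ) * t)) * u m ^ s)
    _ = K ^ s * (K2 * S) := by rw [ENNReal.tsum_mul_right]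
    _ = K ^ s * K2 * S := (mul_assoc _ _ _).symm

/-- For `b > 0`, the truncated quasi-norm built from the dyadic blocks
`I_j = {2^j-1, …, 2^{j+1}-2}` is equivalent to the one built from the full tails
`{ν ≥ 2^j - 1}`; both sides may simultaneously be infinite. -/
theorem truncated_blocks_eq_tails (b q r : ℝ) (hb : 0 < b) (hq : 0 < q) (hr : 0 < r) :
    ∃ c C : ℝ, 0 < c ∧ 0 < C ∧
      ∀ a : ℕ → ℝ≥0,
        (ENNReal.ofReal c *
            (∑' j : ℕ, ENNReal.ofReal ((2 : ℝ) ^ ((j : ℝ) * b * r)) *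
              (∑ ν ∈ Finset.Icc (2 ^ j - 1) (2 ^ (j + 1) - 2), (a ν : ℝ≥0∞) ^ q)
                ^ (r / q)) ^ (1 / r) ≤
          (∑' j : ℕ, ENNReal.ofReal ((2 : ℝ) ^ ((j : ℝ) * b * r)) *
              (∑' ν : ℕ, (a (2 ^ j - 1 + ν) : ℝ≥0∞) ^ q) ^ (r / q)) ^ (1 / r)) ∧
        ((∑' j : ℕ, ENNReal.ofReal ((2 : ℝ) ^ ((j : ℝ) * b * r)) *
              (∑' ν : ℕ, (a (2 ^ j - 1 + ν) : ℝ≥0∞) ^ q) ^ (r / q)) ^ (1 / r) ≤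
          ENNReal.ofReal C *
            (∑' j : ℕ, ENNReal.ofReal ((2 : ℝ) ^ ((j : ℝ) * b * r)) *
              (∑ ν ∈ Finset.Icc (2 ^ j - 1) (2 ^ (j + 1) - 2), (a ν : ℝ≥0∞) ^ q)
                ^ (r / q)) ^ (1 / r)) := by
  obtain ⟨D, hD, hHardy⟩ := hardy (r/q) (b*r) (by positivity) (by positivity)
  refine ⟨1, (D.toReal + 1) ^ (1/r), one_pos, by positivity, fun a => ?_⟩
  set f : ℕ → ℝ≥0∞ := fun ν => (a ν : ℝ≥0∞) ^ q with hf
  set u : ℕ → ℝ≥0∞ := fun m => ∑ ν ∈ Finset.Icc (2 ^ m - 1) (2 ^ (m+1) - 2), f ν with hu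
  have hblocks_eq :
      (∑' j : ℕ, ENNReal.ofReal ((2 : ℝ) ^ ((j : ℝ) * b * r)) *
          (∑ ν ∈ Finset.Icc (2 ^ j - 1) (2 ^ (j + 1) - 2), (a ν : ℝ≥0∞) ^ q) ^ (r / q))
        = ∑' j : ℕ, ENNReal.ofReal ((2 : ℝ) ^ ((j : ℝ) * (b * r))) * u j ^ (r / q) :=
    tsum_congr fun j => by rw [show (j:ℝ) * b * r = (j:ℝ) * (b*r) from mul_assoc _ _ _]
  have htails_eq :
      (∑' j : ℕ, ENNReal.ofReal ((2 : ℝ) ^ ((j : ℝ) * b * r)) *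
          (∑' ν : ℕ, (a (2 ^ j - 1 + ν) : ℝ≥0∞) ^ q) ^ (r / q))
        = ∑' j : ℕ, ENNReal.ofReal ((2 : ℝ) ^ ((j : ℝ) * (b * r))) *
            (∑' k : ℕ, u (j + k)) ^ (r / q) :=
    tsum_congr fun j => by
      rw [show (j:ℝ) * b * r = (j:ℝ) * (b*r) from mul_assoc _ _ _, tail_eq f j]
  constructor
  · rw [ENNReal.ofReal_one, one_mul]
    refine ENNReal.rpow_le_rpow ?_ (by positivity)
    rw [hblocks_eq, htails_eq]
    refine ENNReal.tsum_le_tsum fun j => mul_le_mul_right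
      (ENNReal.rpow_le_rpow ?_ (by positivity)) _
    simpa using ENNReal.le_tsum (f := fun k => u (j + k)) 0
  · have hDC : D ≤ ENNReal.ofReal (D.toReal + 1) := by
      calc D = ENNReal.ofReal D.toReal := (ENNReal.ofReal_toReal hD).symm
        _ ≤ ENNReal.ofReal (D.toReal + 1) := ENNReal.ofReal_le_ofReal (by linarith)
    calc (∑' j : ℕ, ENNReal.ofReal ((2 : ℝ) ^ ((j : ℝ) * b * r)) *
            (∑' ν : ℕ, (a (2 ^ j - 1 + ν) : ℝ≥0∞) ^ q) ^ (r / q)) ^ (1 / r)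
        ≤ (ENNReal.ofReal (D.toReal + 1) *
            (∑' j : ℕ, ENNReal.ofReal ((2 : ℝ) ^ ((j : ℝ) * b * r)) *
              (∑ ν ∈ Finset.Icc (2 ^ j - 1) (2 ^ (j + 1) - 2), (a ν : ℝ≥0∞) ^ q)
                ^ (r / q))) ^ (1 / r) := by
          refine ENNReal.rpow_le_rpow ?_ (by positivity)
          rw [htails_eq, hblocks_eq]
          exact le_trans (hHardy u) (mul_le_mul_left hDC _)
      _ = ENNReal.ofReal (D.toReal + 1) ^ (1/r) *
            (∑' j : ℕ, ENNReal.ofReal ((2 : ℝ) ^ ((j : ℝ) * b * r)) *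
              (∑ ν ∈ Finset.Icc (2 ^ j - 1) (2 ^ (j + 1) - 2), (a ν : ℝ≥0∞) ^ q)
                ^ (r / q)) ^ (1 / r) := ENNReal.mul_rpow_of_nonneg _ _ (by positivity)
      _ = ENNReal.ofReal ((D.toReal + 1) ^ (1/r)) *
            (∑' j : ℕ, ENNReal.ofReal ((2 : ℝ) ^ ((j : ℝ) * b * r)) *
              (∑ ν ∈ Finset.Icc (2 ^ j - 1) (2 ^ (j + 1) - 2), (a ν : ℝ≥0∞) ^ q)
                ^ (r / q)) ^ (1 / r) := by
          rw [ENNReal.ofReal_rpow_of_pos (by positivity)]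
end

section
/- Let 0 < q_1 < q_0 < ∞, 0 < r_0, r_1 < ∞ and b_0, b_1 ∈ ℝ with b_0 + 1/q_0 > b_1 + 1/q_1. Then there exists a constant C > 0 such that for every sequence (a_ν)_{ν≥0} of nonnegative reals: (Σ_{k=0}^∞ 2^{k b_1 r_1} (Σ_{ν ∈ I_k} a_ν^{q_1})^{r_1/q_1})^{1/r_1} ≤ C (Σ_{k=0}^∞ 2^{k b_0 r_0} (Σ_{ν ∈ I_k} a_ν^{q_0})^{r_0/q_0})^{1/r_0}, where I_k = {2^k − 1, ..., 2^{k+1} − 2}. -/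
open scoped ENNReal NNReal

private lemma E_mul (y z : ℝ) :
    (2 : ℝ≥0∞) ^ y * (2 : ℝ≥0∞) ^ z = (2 : ℝ≥0∞) ^ (y + z) :=
  (ENNReal.rpow_add y z (by norm_num) (by norm_num)).symm

private lemma E_rpow (y z : ℝ) :
    ((2 : ℝ≥0∞) ^ y) ^ z = (2 : ℝ≥0∞) ^ (y * z) :=
  (ENNReal.rpow_mul 2 y z).symm

/-- Hölder/power-mean inequality on a finset: for `0 < θ ≤ 1`,
`∑ f i ^ θ ≤ card ^ (1-θ) * (∑ f i) ^ θ`. -/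
private lemma sum_rpow_le_card_rpow_mul (s : Finset ℕ) (f : ℕ → ℝ≥0∞) {θ : ℝ}
    (hθ0 : 0 < θ) (hθ1 : θ ≤ 1) :
    ∑ i ∈ s, f i ^ θ ≤ (s.card : ℝ≥0∞) ^ (1 - θ) * (∑ i ∈ s, f i) ^ θ := by
  rcases s.eq_empty_or_nonempty with rfl | hs
  · simp
  have hn0 : (s.card : ℝ≥0∞) ≠ 0 := by simpa using hs.card_pos.ne'
  have hnt : (s.card : ℝ≥0∞) ≠ ⊤ := by simp
  set n : ℝ≥0∞ := (s.card : ℝ≥0∞) with hn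
  have hw : ∑ _i ∈ s, n⁻¹ = 1 := by
    rw [Finset.sum_const, nsmul_eq_mul, ENNReal.mul_inv_cancel hn0 hnt]
  have hp : 1 ≤ 1 / θ := by rw [le_div_iff₀ hθ0]; linarith
  have key := ENNReal.rpow_arith_mean_le_arith_mean_rpow s (fun _ => n⁻¹)
    (fun i => f i ^ θ) hw hp
  have hsimp : ∀ i : ℕ, (f i ^ θ) ^ (1 / θ) = f i := by
    intro i
    rw [← ENNReal.rpow_mul, mul_one_div, div_self hθ0.ne', ENNReal.rpow_one]
  simp only [hsimp] at key
  have key2 : ∑ i ∈ s, n⁻¹ * f i ^ θ ≤ (∑ i ∈ s, n⁻¹ * f i) ^ θ := by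
    have h := ENNReal.rpow_le_rpow key hθ0.le
    rwa [← ENNReal.rpow_mul, one_div, inv_mul_cancel₀ hθ0.ne', ENNReal.rpow_one] at h
  have h3 : ∑ i ∈ s, f i ^ θ = n * ∑ i ∈ s, n⁻¹ * f i ^ θ := by
    rw [Finset.mul_sum]
    refine Finset.sum_congr rfl fun i _ => ?_
    rw [← mul_assoc, ENNReal.mul_inv_cancel hn0 hnt, one_mul]
  calc ∑ i ∈ s, f i ^ θ = n * ∑ i ∈ s, n⁻¹ * f i ^ θ := h3
    _ ≤ n * (∑ i ∈ s, n⁻¹ * f i) ^ θ := by gcongr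
    _ = n * (n⁻¹ ^ θ * (∑ i ∈ s, f i) ^ θ) := by
        rw [← Finset.mul_sum, ENNReal.mul_rpow_of_nonneg _ _ hθ0.le]
    _ = n ^ (1 - θ) * (∑ i ∈ s, f i) ^ θ := by
        rw [← mul_assoc]
        congr 1
        rw [ENNReal.inv_rpow, ← ENNReal.rpow_neg]
        nth_rw 1 [← ENNReal.rpow_one n]
        rw [← ENNReal.rpow_add _ _ hn0 hnt, sub_eq_add_neg]

private lemma block_card (k : ℕ) :
    (Finset.Icc (2 ^ k - 1 : ℕ) (2 ^ (k + 1) - 2)).card = 2 ^ k := by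
  rw [Nat.card_Icc]
  have h1 : 1 ≤ 2 ^ k := Nat.one_le_two_pow
  have h2 : 2 ^ (k + 1) = 2 * 2 ^ k := by rw [pow_succ]; ring
  omega

/-- The per-block estimate. -/
private lemma block_bound {q₀ q₁ r₀ r₁ b₀ b₁ : ℝ}
    (hq₁ : 0 < q₁) (hq : q₁ < q₀) (hr₀ : 0 < r₀) (hr₁ : 0 < r₁)
    (k : ℕ) (f : ℕ → ℝ≥0∞) (M : ℝ≥0∞)
    (hM : (2 : ℝ≥0∞) ^ ((k : ℝ) * b₀ * r₀) *
        (∑ ν ∈ Finset.Icc (2 ^ k - 1 : ℕ) (2 ^ (k + 1) - 2), f ν ^ q₀) ^ (r₀ / q₀) ≤ M) :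
    (2 : ℝ≥0∞) ^ ((k : ℝ) * b₁ * r₁) *
        (∑ ν ∈ Finset.Icc (2 ^ k - 1 : ℕ) (2 ^ (k + 1) - 2), f ν ^ q₁) ^ (r₁ / q₁) ≤
      (2 : ℝ≥0∞) ^ (-((b₀ + 1/q₀ - (b₁ + 1/q₁)) * r₁) * (k : ℝ)) * M ^ (r₁ / r₀) := by
  have hq₀ : 0 < q₀ := hq₁.trans hq
  have hq₀' : q₀ ≠ 0 := hq₀.ne'
  have hq₁' : q₁ ≠ 0 := hq₁.ne'
  have hr₀' : r₀ ≠ 0 := hr₀.ne'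
  have hr₁' : r₁ ≠ 0 := hr₁.ne'
  set s := Finset.Icc (2 ^ k - 1 : ℕ) (2 ^ (k + 1) - 2) with hs
  set S₀ := ∑ ν ∈ s, f ν ^ q₀ with hS₀
  set θ : ℝ := q₁ / q₀ with hθ
  have hθ0 : 0 < θ := div_pos hq₁ hq₀
  have hθ1 : θ ≤ 1 := by rw [hθ, div_le_one hq₀]; exact hq.le
  -- Hölder on the block
  have hH : ∑ ν ∈ s, f ν ^ q₁ ≤ (2 : ℝ≥0∞) ^ ((k : ℝ) * (1 - θ)) * S₀ ^ θ := by
    have h := sum_rpow_le_card_rpow_mul s (fun ν => f ν ^ q₀) hθ0 hθ1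
    have hfν : ∀ ν, (f ν ^ q₀) ^ θ = f ν ^ q₁ := by
      intro ν
      rw [← ENNReal.rpow_mul, show q₀ * θ = q₁ by rw [hθ]; field_simp]
    simp only [hfν] at h
    have hcard : (s.card : ℝ≥0∞) = (2 : ℝ≥0∞) ^ ((k : ℝ)) := by
      rw [hs, block_card]
      push_cast
      rw [← ENNReal.rpow_natCast]
    rwa [hcard, E_rpow] at h
  -- From the hypothesis on the q₀-block
  have hS : S₀ ^ (r₀ / q₀) ≤ (2 : ℝ≥0∞) ^ (-((k : ℝ) * b₀ * r₀)) * M := by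
    calc S₀ ^ (r₀ / q₀)
        = (2 : ℝ≥0∞) ^ (-((k : ℝ) * b₀ * r₀)) *
            ((2 : ℝ≥0∞) ^ ((k : ℝ) * b₀ * r₀) * S₀ ^ (r₀ / q₀)) := by
          rw [← mul_assoc, E_mul, neg_add_cancel, ENNReal.rpow_zero, one_mul]
      _ ≤ _ := mul_le_mul_right hM _
  -- Combine
  calc (2 : ℝ≥0∞) ^ ((k : ℝ) * b₁ * r₁) * (∑ ν ∈ s, f ν ^ q₁) ^ (r₁ / q₁)
      ≤ (2 : ℝ≥0∞) ^ ((k : ℝ) * b₁ * r₁) *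
          ((2 : ℝ≥0∞) ^ ((k : ℝ) * (1 - θ)) * S₀ ^ θ) ^ (r₁ / q₁) := by
        gcongr
    _ = (2 : ℝ≥0∞) ^ ((k : ℝ) * b₁ * r₁ + (k : ℝ) * (1 - θ) * (r₁ / q₁)) *
          (S₀ ^ (r₀ / q₀)) ^ (r₁ / r₀) := by
        rw [ENNReal.mul_rpow_of_nonneg _ _ (by positivity : (0:ℝ) ≤ r₁ / q₁), E_rpow,
          ← mul_assoc, E_mul, ← ENNReal.rpow_mul, ← ENNReal.rpow_mul,
          show r₀ / q₀ * (r₁ / r₀) = θ * (r₁ / q₁) by rw [hθ]; field_simp; try ring]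
    _ ≤ (2 : ℝ≥0∞) ^ ((k : ℝ) * b₁ * r₁ + (k : ℝ) * (1 - θ) * (r₁ / q₁)) *
          ((2 : ℝ≥0∞) ^ (-((k : ℝ) * b₀ * r₀)) * M) ^ (r₁ / r₀) := by
        gcongr
    _ = (2 : ℝ≥0∞) ^ (-((b₀ + 1/q₀ - (b₁ + 1/q₁)) * r₁) * (k : ℝ)) * M ^ (r₁ / r₀) := by
        rw [ENNReal.mul_rpow_of_nonneg _ _ (by positivity : (0:ℝ) ≤ r₁ / r₀), E_rpow,
          ← mul_assoc, E_mul,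
          show (k:ℝ) * b₁ * r₁ + (k:ℝ) * (1 - θ) * (r₁ / q₁) + -((k:ℝ) * b₀ * r₀) * (r₁ / r₀)
              = -((b₀ + 1/q₀ - (b₁ + 1/q₁)) * r₁) * (k:ℝ) by rw [hθ]; field_simp; ring]

/-- Sufficiency part of the embedding between truncated sequence spaces with equal
smoothness: if `q₁ < q₀` and `b₀ + 1/q₀ > b₁ + 1/q₁`, then the `(b₁, r₁, q₁)`-quasi-norm
is dominated by the `(b₀, r₀, q₀)`-quasi-norm, over the dyadic blocks
`I_k = {2^k-1, …, 2^{k+1}-2}`. -/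
theorem truncated_embedding_sufficiency (q₀ q₁ r₀ r₁ b₀ b₁ : ℝ)
    (hq₁ : 0 < q₁) (hq : q₁ < q₀) (hr₀ : 0 < r₀) (hr₁ : 0 < r₁)
    (hb : b₁ + 1 / q₁ < b₀ + 1 / q₀) :
    ∃ C : ℝ, 0 < C ∧
      ∀ a : ℕ → ℝ≥0,
        (∑' k : ℕ, ENNReal.ofReal ((2 : ℝ) ^ ((k : ℝ) * b₁ * r₁)) *
            (∑ ν ∈ Finset.Icc (2 ^ k - 1 : ℕ) (2 ^ (k + 1) - 2), (a ν : ℝ≥0∞) ^ q₁)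
              ^ (r₁ / q₁)) ^ (1 / r₁) ≤
          ENNReal.ofReal C *
            (∑' k : ℕ, ENNReal.ofReal ((2 : ℝ) ^ ((k : ℝ) * b₀ * r₀)) *
              (∑ ν ∈ Finset.Icc (2 ^ k - 1 : ℕ) (2 ^ (k + 1) - 2), (a ν : ℝ≥0∞) ^ q₀)
                ^ (r₀ / q₀)) ^ (1 / r₀) := by
  have hq₀ : 0 < q₀ := hq₁.trans hq
  set ε : ℝ := b₀ + 1/q₀ - (b₁ + 1/q₁) with hεdef
  have hε : 0 < ε := by rw [hεdef]; linarith
  set x : ℝ≥0∞ := (2 : ℝ≥0∞) ^ (-(ε * r₁)) with hxdef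
  have hx1 : x < 1 := by
    rw [hxdef, ENNReal.rpow_neg]
    exact ENNReal.inv_lt_one.mpr (ENNReal.one_lt_rpow (by norm_num) (by positivity))
  set D : ℝ≥0∞ := ∑' k : ℕ, x ^ k with hDdef
  have hDsub : (1 : ℝ≥0∞) - x ≠ 0 := by
    simp only [ne_eq, tsub_eq_zero_iff_le]
    exact hx1.not_ge
  have hDt : D ≠ ⊤ := by
    rw [hDdef, ENNReal.tsum_geometric]
    exact ENNReal.inv_ne_top.mpr hDsub
  have hD1 : 1 ≤ D := by
    have h := ENNReal.le_tsum (f := fun k : ℕ => x ^ k) 0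
    rw [pow_zero] at h
    exact h.trans_eq hDdef.symm
  have hDr : D ^ (1 / r₁) ≠ ⊤ :=
    (ENNReal.rpow_lt_top_of_nonneg (by positivity) hDt).ne
  have hDr0 : D ^ (1 / r₁) ≠ 0 := by
    intro h0
    have h := ENNReal.rpow_le_rpow hD1 (by positivity : (0:ℝ) ≤ 1 / r₁)
    rw [ENNReal.one_rpow, h0] at h
    exact (not_le.mpr zero_lt_one) h
  refine ⟨(D ^ (1 / r₁)).toReal, ENNReal.toReal_pos hDr0 hDr, fun a => ?_⟩
  rw [ENNReal.ofReal_toReal hDr]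
  have hof : ∀ y : ℝ, ENNReal.ofReal ((2 : ℝ) ^ y) = (2 : ℝ≥0∞) ^ y := by
    intro y
    rw [← ENNReal.ofReal_rpow_of_pos (by norm_num : (0:ℝ) < 2)]
    norm_num
  simp only [hof]
  set M : ℝ≥0∞ := ∑' k : ℕ, (2 : ℝ≥0∞) ^ ((k : ℝ) * b₀ * r₀) *
    (∑ ν ∈ Finset.Icc (2 ^ k - 1 : ℕ) (2 ^ (k + 1) - 2), ((a ν : ℝ≥0∞)) ^ q₀) ^ (r₀ / q₀)
    with hMdef
  have hblock : ∀ k : ℕ,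
      (2 : ℝ≥0∞) ^ ((k : ℝ) * b₁ * r₁) *
          (∑ ν ∈ Finset.Icc (2 ^ k - 1 : ℕ) (2 ^ (k + 1) - 2), ((a ν : ℝ≥0∞)) ^ q₁)
            ^ (r₁ / q₁) ≤ x ^ k * M ^ (r₁ / r₀) := by
    intro k
    have hM := ENNReal.le_tsum (f := fun k : ℕ => (2 : ℝ≥0∞) ^ ((k : ℝ) * b₀ * r₀) *
      (∑ ν ∈ Finset.Icc (2 ^ k - 1 : ℕ) (2 ^ (k + 1) - 2), ((a ν : ℝ≥0∞)) ^ q₀)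
        ^ (r₀ / q₀)) k
    have h := block_bound (b₀ := b₀) (b₁ := b₁) hq₁ hq hr₀ hr₁ k (fun ν => (a ν : ℝ≥0∞)) M hM
    have hx : (2 : ℝ≥0∞) ^ (-((b₀ + 1/q₀ - (b₁ + 1/q₁)) * r₁) * (k : ℝ)) = x ^ k := by
      rw [hxdef, ← ENNReal.rpow_natCast, E_rpow, hεdef]
    rwa [hx] at h
  calc (∑' k : ℕ, (2 : ℝ≥0∞) ^ ((k : ℝ) * b₁ * r₁) *
        (∑ ν ∈ Finset.Icc (2 ^ k - 1 : ℕ) (2 ^ (k + 1) - 2), ((a ν : ℝ≥0∞)) ^ q₁)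
          ^ (r₁ / q₁)) ^ (1 / r₁)
      ≤ (∑' k : ℕ, x ^ k * M ^ (r₁ / r₀)) ^ (1 / r₁) := by
        exact ENNReal.rpow_le_rpow (ENNReal.tsum_le_tsum hblock) (by positivity)
    _ = (D * M ^ (r₁ / r₀)) ^ (1 / r₁) := by rw [ENNReal.tsum_mul_right]
    _ = D ^ (1 / r₁) * M ^ (1 / r₀) := by
        rw [ENNReal.mul_rpow_of_nonneg _ _ (by positivity : (0:ℝ) ≤ 1 / r₁),
          ← ENNReal.rpow_mul,
          show r₁ / r₀ * (1 / r₁) = 1 / r₀ by field_simp; try ring]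
end

section
/- Let 0 < q_0, q_1 < ∞, 0 < r_0, r_1 < ∞ and b_0, b_1 ∈ ℝ. Suppose there exists a constant C > 0 such that for every sequence (a_ν)_{ν≥0} of nonnegative reals: (Σ_{k=0}^∞ 2^{k b_1 r_1} (Σ_{ν ∈ I_k} a_ν^{q_1})^{r_1/q_1})^{1/r_1} ≤ C (Σ_{k=0}^∞ 2^{k b_0 r_0} (Σ_{ν ∈ I_k} a_ν^{q_0})^{r_0/q_0})^{1/r_0}, where I_k = {2^k − 1, ..., 2^{k+1} − 2}. Then b_1 + 1/q_1 ≤ b_0 + 1/q_0. -/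
open scoped ENNReal NNReal

lemma disjoint_blocks {k N ν : ℕ} (hk : 2 ^ k - 1 ≤ ν ∧ ν ≤ 2 ^ (k+1) - 2)
    (hN : 2 ^ N - 1 ≤ ν ∧ ν ≤ 2 ^ (N+1) - 2) : k = N := by
  by_contra hne
  rcases Nat.lt_or_ge k N with hlt | hge
  · have : (2:ℕ) ^ (k+1) ≤ 2 ^ N := Nat.pow_le_pow_right (by norm_num) hlt
    have h1 : (1:ℕ) ≤ 2 ^ k := Nat.one_le_two_pow
    have h2 : (1:ℕ) ≤ 2 ^ N := Nat.one_le_two_pow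
    omega
  · have hlt : N < k := lt_of_le_of_ne hge (Ne.symm hne)
    have : (2:ℕ) ^ (N+1) ≤ 2 ^ k := Nat.pow_le_pow_right (by norm_num) hlt
    have h1 : (1:ℕ) ≤ 2 ^ k := Nat.one_le_two_pow
    have h2 : (1:ℕ) ≤ 2 ^ N := Nat.one_le_two_pow
    omega

lemma block_eval (N : ℕ) (b r q : ℝ) (hq : 0 < q) (hr : 0 < r) :
    (∑' k : ℕ, ENNReal.ofReal ((2 : ℝ) ^ ((k : ℝ) * b * r)) *
        (∑ ν ∈ Finset.Icc (2 ^ k - 1 : ℕ) (2 ^ (k + 1) - 2),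
          (((if ν ∈ Finset.Icc (2 ^ N - 1 : ℕ) (2 ^ (N + 1) - 2) then (1:ℝ≥0) else 0) : ℝ≥0) : ℝ≥0∞) ^ q)
          ^ (r / q)) ^ (1 / r)
      = ENNReal.ofReal ((2 : ℝ) ^ ((N : ℝ) * (b + 1 / q))) := by
  have hsum : ∀ k : ℕ, (∑ ν ∈ Finset.Icc (2 ^ k - 1 : ℕ) (2 ^ (k + 1) - 2),
      (((if ν ∈ Finset.Icc (2 ^ N - 1 : ℕ) (2 ^ (N + 1) - 2) then (1:ℝ≥0) else 0) : ℝ≥0) : ℝ≥0∞) ^ q)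
      = if k = N then (((2:ℕ) ^ N : ℕ) : ℝ≥0∞) else 0 := by
    intro k
    by_cases hk : k = N
    · subst hk
      have hone : ∀ ν ∈ Finset.Icc (2 ^ k - 1 : ℕ) (2 ^ (k + 1) - 2),
          (((if ν ∈ Finset.Icc (2 ^ k - 1 : ℕ) (2 ^ (k + 1) - 2) then (1:ℝ≥0) else 0) : ℝ≥0) : ℝ≥0∞) ^ q = 1 := by
        intro ν hν; rw [if_pos hν]; simp
      rw [if_pos rfl, Finset.sum_congr rfl hone, Finset.sum_const, Nat.card_Icc]
      have h1 : (1:ℕ) ≤ 2 ^ k := Nat.one_le_two_pow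
      have h2 : (2:ℕ) ^ (k+1) = 2 * 2 ^ k := by ring
      have h3 : 2 ^ (k + 1) - 2 + 1 - (2 ^ k - 1) = 2 ^ k := by omega
      rw [h3]; simp
    · rw [if_neg hk]
      apply Finset.sum_eq_zero
      intro ν hν
      rw [if_neg (fun hmem => hk (disjoint_blocks (Finset.mem_Icc.mp hν) (Finset.mem_Icc.mp hmem)))]
      simp [ENNReal.zero_rpow_of_pos hq]
  have htsum : (∑' k : ℕ, ENNReal.ofReal ((2 : ℝ) ^ ((k : ℝ) * b * r)) *
        (∑ ν ∈ Finset.Icc (2 ^ k - 1 : ℕ) (2 ^ (k + 1) - 2),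
          (((if ν ∈ Finset.Icc (2 ^ N - 1 : ℕ) (2 ^ (N + 1) - 2) then (1:ℝ≥0) else 0) : ℝ≥0) : ℝ≥0∞) ^ q)
          ^ (r / q))
      = ENNReal.ofReal ((2 : ℝ) ^ ((N : ℝ) * b * r)) *
          (((2:ℕ) ^ N : ℕ) : ℝ≥0∞) ^ (r / q) := by
    rw [tsum_eq_single N]
    · rw [hsum N, if_pos rfl]
    · intro k hk
      rw [hsum k, if_neg hk, ENNReal.zero_rpow_of_pos (by positivity), mul_zero]
  rw [htsum]
  have hcast : (((2:ℕ) ^ N : ℕ) : ℝ≥0∞) = ENNReal.ofReal ((2:ℝ) ^ ((N:ℝ))) := by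
    rw [Real.rpow_natCast]
    push_cast
    rw [ENNReal.ofReal_pow (by norm_num)]
    norm_num
  rw [hcast, ENNReal.ofReal_rpow_of_pos (by positivity),
    ← ENNReal.ofReal_mul (by positivity),
    ENNReal.ofReal_rpow_of_pos (by positivity)]
  congr 1
  rw [← Real.rpow_mul (by norm_num), ← Real.rpow_add (by norm_num),
    ← Real.rpow_mul (by norm_num)]
  congr 1
  field_simp

/-- Necessity part of the embedding between truncated sequence spaces: if the
`(b₁, r₁, q₁)`-quasi-norm is dominated by the `(b₀, r₀, q₀)`-quasi-norm over the
dyadic blocks `I_k = {2^k-1, …, 2^{k+1}-2}` for all nonnegative sequences, then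
`b₁ + 1/q₁ ≤ b₀ + 1/q₀`. -/
theorem truncated_embedding_necessity (q₀ q₁ r₀ r₁ b₀ b₁ : ℝ)
    (hq₀ : 0 < q₀) (hq₁ : 0 < q₁) (hr₀ : 0 < r₀) (hr₁ : 0 < r₁)
    (C : ℝ) (hC : 0 < C)
    (h : ∀ a : ℕ → ℝ≥0,
        (∑' k : ℕ, ENNReal.ofReal ((2 : ℝ) ^ ((k : ℝ) * b₁ * r₁)) *
            (∑ ν ∈ Finset.Icc (2 ^ k - 1 : ℕ) (2 ^ (k + 1) - 2), (a ν : ℝ≥0∞) ^ q₁)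
              ^ (r₁ / q₁)) ^ (1 / r₁) ≤
          ENNReal.ofReal C *
            (∑' k : ℕ, ENNReal.ofReal ((2 : ℝ) ^ ((k : ℝ) * b₀ * r₀)) *
              (∑ ν ∈ Finset.Icc (2 ^ k - 1 : ℕ) (2 ^ (k + 1) - 2), (a ν : ℝ≥0∞) ^ q₀)
                ^ (r₀ / q₀)) ^ (1 / r₀)) :
    b₁ + 1 / q₁ ≤ b₀ + 1 / q₀ := by
  have key : ∀ N : ℕ, (2:ℝ) ^ ((N:ℝ) * (b₁ + 1/q₁)) ≤ C * (2:ℝ) ^ ((N:ℝ) * (b₀ + 1/q₀)) := by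
    intro N
    have := h (fun ν => if ν ∈ Finset.Icc (2 ^ N - 1 : ℕ) (2 ^ (N + 1) - 2) then (1:ℝ≥0) else 0)
    rw [block_eval N b₁ r₁ q₁ hq₁ hr₁, block_eval N b₀ r₀ q₀ hq₀ hr₀,
      ← ENNReal.ofReal_mul hC.le] at this
    exact (ENNReal.ofReal_le_ofReal_iff (by positivity)).mp this
  by_contra hcon
  push_neg at hcon
  set t : ℝ := (b₁ + 1/q₁) - (b₀ + 1/q₀) with ht
  have htpos : 0 < t := by rw [ht]; linarith
  have h2t : 1 < (2:ℝ) ^ t :=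
    (Real.one_lt_rpow_iff_of_pos (by norm_num)).mpr (Or.inl ⟨by norm_num, htpos⟩)
  obtain ⟨n, hn⟩ := pow_unbounded_of_one_lt C h2t
  have hkey := key n
  have hsplit : (2:ℝ) ^ ((n:ℝ) * (b₁ + 1/q₁))
      = (2:ℝ) ^ ((n:ℝ) * t) * (2:ℝ) ^ ((n:ℝ) * (b₀ + 1/q₀)) := by
    rw [← Real.rpow_add (by norm_num)]; congr 1; ring
  have hpos : (0:ℝ) < (2:ℝ) ^ ((n:ℝ) * (b₀ + 1/q₀)) := Real.rpow_pos_of_pos (by norm_num) _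
  have h1 : (2:ℝ) ^ ((n:ℝ) * t) ≤ C := by
    rw [hsplit] at hkey
    exact le_of_mul_le_mul_right hkey hpos
  have h2 : ((2:ℝ) ^ t) ^ n = (2:ℝ) ^ ((n:ℝ) * t) := by
    rw [← Real.rpow_natCast ((2:ℝ) ^ t) n, ← Real.rpow_mul (by norm_num)]
    congr 1; ring
  rw [h2] at hn
  linarith
end

section
/- Let (d_n)_{n≥1} be a sequence of complex numbers with d_n → 0 as n → ∞, and suppose Σ_{k=n}^{2n−1} |d_k − d_{k+1}| ≤ C |d_n| for every n ≥ 1 and some constant C ≥ 0. Then there exists a constant C′ (depending only on C) such that |d_n| ≤ C′ Σ_{k ≥ ⌈n/2⌉} |d_k| / k for every n ≥ 1. -/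
open scoped ENNReal

lemma gm_tele (d : ℕ → ℂ) (k : ℕ) :
    ∀ n, k ≤ n → ‖d n - d k‖ ≤ ∑ i ∈ Finset.Ico k n, ‖d i - d (i + 1)‖ := by
  intro n hn
  induction n, hn using Nat.le_induction with
  | base => simp
  | succ n hn ih =>
    rw [Finset.sum_Ico_succ_top hn]
    calc ‖d (n + 1) - d k‖
        ≤ ‖d n - d k‖ + ‖d (n + 1) - d n‖ := by
          have := norm_add_le (d n - d k) (d (n + 1) - d n)
          simpa [sub_add_sub_cancel'] using this
      _ ≤ _ := by
          rw [← norm_neg (d (n + 1) - d n), neg_sub]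
          linarith

/-- A vanishing general monotone sequence satisfies
`|d_n| ≤ C' Σ_{k ≥ ⌈n/2⌉} |d_k|/k`, with `C'` depending only on the GM constant `C`.
The tail sum is taken in `ℝ≥0∞`, reindexed by `k = ⌈n/2⌉ + j`. -/
theorem gm_tail_bound (C : ℝ) (hC : 0 ≤ C) :
    ∃ C' : ℝ, 0 < C' ∧ ∀ d : ℕ → ℂ,
      Filter.Tendsto d Filter.atTop (nhds 0) →
      (∀ n : ℕ, 1 ≤ n →
        ∑ k ∈ Finset.Icc n (2 * n - 1), ‖d k - d (k + 1)‖ ≤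
          C * ‖d n‖) →
      ∀ n : ℕ, 1 ≤ n →
        ENNReal.ofReal (‖d n‖) ≤
          ENNReal.ofReal C' *
            ∑' j : ℕ, ENNReal.ofReal
              (‖d ((n + 1) / 2 + j)‖ / (((n + 1) / 2 + j : ℕ) : ℝ)) := by
  refine ⟨2 * (C + 1), by linarith, ?_⟩
  intro d _ hGM n hn
  set m := (n + 1) / 2 with hm
  have hm1 : 1 ≤ m := Nat.one_le_div_iff (by norm_num) |>.2 (by omega)
  have hmn : m ≤ n := by omega
  have h2m : n ≤ 2 * m := by omega
  -- key: for m ≤ k ≤ n, |d n| ≤ (C+1) * |d k|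
  have key : ∀ k, m ≤ k → k ≤ n → ‖d n‖ ≤ (C + 1) * ‖d k‖ := by
    intro k hk1 hk2
    have h1 : ‖d n - d k‖ ≤ ∑ i ∈ Finset.Ico k n, ‖d i - d (i + 1)‖ :=
      gm_tele d k n hk2
    have hsub : Finset.Ico k n ⊆ Finset.Icc k (2 * k - 1) := by
      intro x hx
      simp only [Finset.mem_Ico, Finset.mem_Icc] at hx ⊢
      omega
    have h2 : ∑ i ∈ Finset.Ico k n, ‖d i - d (i + 1)‖ ≤
        ∑ i ∈ Finset.Icc k (2 * k - 1), ‖d i - d (i + 1)‖ :=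
      Finset.sum_le_sum_of_subset_of_nonneg hsub (fun _ _ _ => norm_nonneg _)
    have h3 := hGM k (by omega)
    have h4 : ‖d n‖ ≤ ‖d k‖ + ‖d n - d k‖ := by
      have := norm_add_le (d k) (d n - d k)
      simpa using this
    nlinarith [norm_nonneg (d k)]
  -- real partial sum bound
  set S : ℝ := ∑ j ∈ Finset.range (n - m + 1), ‖d (m + j)‖ / ((m + j : ℕ) : ℝ)
    with hS
  have hSbound : ‖d n‖ ≤ 2 * (C + 1) * S := by
    have hterm : ∀ j ∈ Finset.range (n - m + 1),
        ‖d n‖ / ((C + 1) * n) ≤ ‖d (m + j)‖ / ((m + j : ℕ) : ℝ) := by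
      intro j hj
      simp only [Finset.mem_range] at hj
      have hk1 : m ≤ m + j := Nat.le_add_right _ _
      have hk2 : m + j ≤ n := by omega
      have hkey := key (m + j) hk1 hk2
      have hpos : (0 : ℝ) < ((m + j : ℕ) : ℝ) := by positivity
      have hnpos : (0 : ℝ) < (n : ℝ) := by positivity
      rw [div_le_div_iff₀ (by positivity) hpos]
      have hle : ((m + j : ℕ) : ℝ) ≤ (n : ℝ) := by exact_mod_cast hk2
      nlinarith [norm_nonneg (d (m + j)),
        norm_nonneg (d n)]
    have hsum : ∑ j ∈ Finset.range (n - m + 1), ‖d n‖ / ((C + 1) * n) ≤ S :=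
      Finset.sum_le_sum hterm
    rw [Finset.sum_const, Finset.card_range, nsmul_eq_mul] at hsum
    have hcard : (n : ℝ) ≤ 2 * ((n - m + 1 : ℕ) : ℝ) := by
      have : n ≤ 2 * (n - m + 1) := by omega
      exact_mod_cast this
    have hnpos : (0 : ℝ) < (n : ℝ) := by positivity
    have hCpos : (0 : ℝ) < C + 1 := by linarith
    have hb : (0:ℝ) < (C + 1) * n := by positivity
    rw [mul_div_assoc', div_le_iff₀ hb] at hsum
    have hxnn := norm_nonneg (d n)
    have hSnn' : 0 ≤ S := Finset.sum_nonneg fun j _ => by positivity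
    nlinarith [mul_le_mul_of_nonneg_right hcard hxnn]
  -- move to ENNReal
  have hSnn : 0 ≤ S := Finset.sum_nonneg fun j _ => by positivity
  calc ENNReal.ofReal (‖d n‖)
      ≤ ENNReal.ofReal (2 * (C + 1) * S) := ENNReal.ofReal_le_ofReal hSbound
    _ = ENNReal.ofReal (2 * (C + 1)) * ENNReal.ofReal S :=
        ENNReal.ofReal_mul (by linarith)
    _ ≤ _ := by
        refine mul_le_mul_right ?_ _
        rw [hS, ENNReal.ofReal_sum_of_nonneg (fun j _ => by positivity)]
        exact ENNReal.sum_le_tsum _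
end

section
/- Let (X, μ) be a measure space, let (A_0, A_1) be a compatible couple of Banach spaces (both continuously embedded in a Hausdorff topological vector space), and let 1 ≤ p < ∞. For a simple function f : X → A_0 ∩ A_1 (a finite sum Σ_i a_i 1_{E_i} with a_i ∈ A_0 ∩ A_1 and the E_i pairwise disjoint of finite measure) and t > 0, let K(t, f; L_p(A_0), L_p(A_1)) denote the K-functional of the couple (L_p(X; A_0), L_p(X; A_1)), and K(t, f(x); A_0, A_1) the pointwise K-functional. Then there exist constants c, C > 0 depending only on p such that c (∫_X K(t, f(x); A_0, A_1)^p dμ(x))^{1/p} ≤ K(t, f; L_p(A_0), L_p(A_1)) ≤ C (∫_X K(t, f(x); A_0, A_1)^p dμ(x))^{1/p} for all t > 0. -/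
open scoped ENNReal
open MeasureTheory

/-- The simple function `x ↦ Σ_i a_i 1_{E_i}(x)`. -/
noncomputable def simpleFn {X A : Type*} [AddCommMonoid A] (n : ℕ)
    (S : Fin n → Set X) (a : Fin n → A) : X → A :=
  fun x => ∑ i, (S i).indicator (fun _ => a i) x

lemma simpleFn_apply_of_mem {X A : Type*} [AddCommMonoid A] {n : ℕ}
    {S : Fin n → Set X} (hdisj : Pairwise (fun i j => Disjoint (S i) (S j)))
    (a : Fin n → A) {i : Fin n} {x : X} (hx : x ∈ S i) :
    simpleFn n S a x = a i := by
  unfold simpleFn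
  rw [Finset.sum_eq_single i]
  · simp [hx]
  · intro j _ hj
    have : x ∉ S j := fun hxj => (hdisj hj).ne_of_mem hxj hx rfl
    simp [this]
  · simp

lemma simpleFn_apply_of_not_mem {X A : Type*} [AddCommMonoid A] {n : ℕ}
    {S : Fin n → Set X} (a : Fin n → A) {x : X} (hx : x ∉ ⋃ i, S i) :
    simpleFn n S a x = 0 := by
  unfold simpleFn
  refine Finset.sum_eq_zero fun j _ => ?_
  have : x ∉ S j := fun h => hx (Set.mem_iUnion.2 ⟨j, h⟩)
  simp [this]

lemma map_simpleFn {X A E : Type*} [NormedAddCommGroup A] [NormedSpace ℝ A]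
    [AddCommGroup E] [Module ℝ E] [TopologicalSpace E]
    (T : A →L[ℝ] E) (n : ℕ) (S : Fin n → Set X) (a : Fin n → A) (x : X) :
    T (simpleFn n S a x) = simpleFn n S (fun i => T (a i)) x := by
  unfold simpleFn
  rw [map_sum]
  refine Finset.sum_congr rfl fun i _ => ?_
  by_cases h : x ∈ S i <;> simp [h]

lemma simpleFn_add {X A : Type*} [AddCommMonoid A] (n : ℕ) (S : Fin n → Set X)
    (u v : Fin n → A) (x : X) :
    simpleFn n S (fun i => u i + v i) x = simpleFn n S u x + simpleFn n S v x := by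
  unfold simpleFn
  rw [← Finset.sum_add_distrib]
  refine Finset.sum_congr rfl fun i _ => ?_
  by_cases h : x ∈ S i <;> simp [h]

lemma simpleFn_stronglyMeasurable {X A : Type*} [MeasurableSpace X] [AddCommMonoid A]
    [TopologicalSpace A] [ContinuousAdd A] {n : ℕ} {S : Fin n → Set X}
    (hS : ∀ i, MeasurableSet (S i)) (a : Fin n → A) :
    StronglyMeasurable (simpleFn n S a) :=
  Finset.stronglyMeasurable_fun_sum _ fun i _ => stronglyMeasurable_const.indicator (hS i)

lemma simpleFn_measurable_ennreal {X : Type*} [MeasurableSpace X] {n : ℕ} {S : Fin n → Set X}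
    (hS : ∀ i, MeasurableSet (S i)) (a : Fin n → ℝ≥0∞) :
    Measurable (simpleFn n S a) :=
  Finset.measurable_sum _ fun i _ => measurable_const.indicator (hS i)

section aux
variable {E A₀ A₁ : Type*} [AddCommGroup E] [Module ℝ E] [TopologicalSpace E]
  [NormedAddCommGroup A₀] [NormedSpace ℝ A₀] [NormedAddCommGroup A₁] [NormedSpace ℝ A₁]

noncomputable def KptAux (ι₀ : A₀ →L[ℝ] E) (ι₁ : A₁ →L[ℝ] E) (t : ℝ) (v : A₀) : ℝ≥0∞ :=
  ⨅ d : {yz : A₀ × A₁ // ι₀ yz.1 + ι₁ yz.2 = ι₀ v},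
    ENNReal.ofReal ‖d.val.1‖ + ENNReal.ofReal t * ENNReal.ofReal ‖d.val.2‖

lemma KptAux_def (ι₀ : A₀ →L[ℝ] E) (ι₁ : A₁ →L[ℝ] E) (t : ℝ) (v : A₀) :
    (⨅ d : {yz : A₀ × A₁ // ι₀ yz.1 + ι₁ yz.2 = ι₀ v},
      ENNReal.ofReal ‖d.val.1‖ + ENNReal.ofReal t * ENNReal.ofReal ‖d.val.2‖)
      = KptAux ι₀ ι₁ t v := rfl

lemma KptAux_le (ι₀ : A₀ →L[ℝ] E) (ι₁ : A₁ →L[ℝ] E) (t : ℝ) (v : A₀)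
    (d : {yz : A₀ × A₁ // ι₀ yz.1 + ι₁ yz.2 = ι₀ v}) :
    KptAux ι₀ ι₁ t v ≤ ENNReal.ofReal ‖d.val.1‖ + ENNReal.ofReal t * ENNReal.ofReal ‖d.val.2‖ :=
  iInf_le _ d

lemma KptAux_zero (ι₀ : A₀ →L[ℝ] E) (ι₁ : A₁ →L[ℝ] E) (t : ℝ) :
    KptAux ι₀ ι₁ t 0 = 0 := by
  refine le_antisymm ?_ zero_le
  refine le_trans (KptAux_le ι₀ ι₁ t 0 ⟨(0, 0), by simp⟩) ?_
  simp

lemma KptAux_ne_top (ι₀ : A₀ →L[ℝ] E) (ι₁ : A₁ →L[ℝ] E) (t : ℝ) (v : A₀) :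
    KptAux ι₀ ι₁ t v ≠ ⊤ := by
  refine ne_top_of_le_ne_top ?_ (KptAux_le ι₀ ι₁ t v ⟨(v, 0), by simp⟩)
  simp

lemma KptAux_exists_lt (ι₀ : A₀ →L[ℝ] E) (ι₁ : A₁ →L[ℝ] E) (t : ℝ) (v : A₀)
    {δ : ℝ} (hδ : 0 < δ) :
    ∃ d : {yz : A₀ × A₁ // ι₀ yz.1 + ι₁ yz.2 = ι₀ v},
      ENNReal.ofReal ‖d.val.1‖ + ENNReal.ofReal t * ENNReal.ofReal ‖d.val.2‖
        < KptAux ι₀ ι₁ t v + ENNReal.ofReal δ := by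
  have h : KptAux ι₀ ι₁ t v < KptAux ι₀ ι₁ t v + ENNReal.ofReal δ :=
    ENNReal.lt_add_right (KptAux_ne_top ι₀ ι₁ t v) (by simp [hδ])
  exact iInf_lt_iff.1 h

end aux

set_option maxHeartbeats 1000000 in
/-- For a compatible Banach couple `(A₀, A₁)` (both continuously and injectively embedded
in a Hausdorff topological vector space `E`) and `1 ≤ p < ∞`, the K-functional of a
simple `A₀ ∩ A₁`-valued function for the couple `(L_p(A₀), L_p(A₁))` is equivalent,
with constants depending only on `p`, to the `L_p` norm of the pointwise K-functional. -/
theorem Kfunctional_Lp_pointwise {X : Type*} [MeasurableSpace X] (μ : Measure X)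
    {E : Type*} [AddCommGroup E] [Module ℝ E] [TopologicalSpace E] [T2Space E]
    {A₀ A₁ : Type*} [NormedAddCommGroup A₀] [NormedSpace ℝ A₀] [CompleteSpace A₀]
    [NormedAddCommGroup A₁] [NormedSpace ℝ A₁] [CompleteSpace A₁]
    (ι₀ : A₀ →L[ℝ] E) (ι₁ : A₁ →L[ℝ] E)
    (hι₀ : Function.Injective ι₀) (hι₁ : Function.Injective ι₁)
    (p : ℝ) (hp : 1 ≤ p) :
    ∃ c C : ℝ, 0 < c ∧ 0 < C ∧
      ∀ (n : ℕ) (S : Fin n → Set X) (a : Fin n → A₀) (b : Fin n → A₁),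
        (∀ i, MeasurableSet (S i)) → (∀ i, μ (S i) < ⊤) →
        Pairwise (fun i j => Disjoint (S i) (S j)) →
        (∀ i, ι₀ (a i) = ι₁ (b i)) →
        ∀ t : ℝ, 0 < t →
          (ENNReal.ofReal c *
              (∫⁻ x, (⨅ d : {yz : A₀ × A₁ // ι₀ yz.1 + ι₁ yz.2 = ι₀ (simpleFn n S a x)},
                  ENNReal.ofReal ‖d.val.1‖ + ENNReal.ofReal t * ENNReal.ofReal ‖d.val.2‖)
                    ^ p ∂μ) ^ (1 / p) ≤
            ⨅ gh : {gh : (X → A₀) × (X → A₁) //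
                (∀ x, ι₀ (gh.1 x) + ι₁ (gh.2 x) = ι₀ (simpleFn n S a x)) ∧
                AEStronglyMeasurable gh.1 μ ∧ AEStronglyMeasurable gh.2 μ},
              ((∫⁻ x, ENNReal.ofReal ‖gh.val.1 x‖ ^ p ∂μ) ^ (1 / p) +
                ENNReal.ofReal t * (∫⁻ x, ENNReal.ofReal ‖gh.val.2 x‖ ^ p ∂μ) ^ (1 / p))) ∧
          ((⨅ gh : {gh : (X → A₀) × (X → A₁) //
                (∀ x, ι₀ (gh.1 x) + ι₁ (gh.2 x) = ι₀ (simpleFn n S a x)) ∧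
                AEStronglyMeasurable gh.1 μ ∧ AEStronglyMeasurable gh.2 μ},
              ((∫⁻ x, ENNReal.ofReal ‖gh.val.1 x‖ ^ p ∂μ) ^ (1 / p) +
                ENNReal.ofReal t * (∫⁻ x, ENNReal.ofReal ‖gh.val.2 x‖ ^ p ∂μ) ^ (1 / p))) ≤
            ENNReal.ofReal C *
              (∫⁻ x, (⨅ d : {yz : A₀ × A₁ // ι₀ yz.1 + ι₁ yz.2 = ι₀ (simpleFn n S a x)},
                  ENNReal.ofReal ‖d.val.1‖ + ENNReal.ofReal t * ENNReal.ofReal ‖d.val.2‖)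
                    ^ p ∂μ) ^ (1 / p)) := by
  have hp0 : (0:ℝ) < p := lt_of_lt_of_le one_pos hp
  have h1p : (0:ℝ) ≤ 1 / p := by positivity
  refine ⟨1, 2, one_pos, two_pos, ?_⟩
  intro n S a b hSm hSfin hdisj hab t ht
  simp only [KptAux_def]
  set I : ℝ≥0∞ := (∫⁻ x, KptAux ι₀ ι₁ t (simpleFn n S a x) ^ p ∂μ) ^ (1 / p) with hI
  have hmulpull : ∀ (f : X → ℝ≥0∞) (c : ℝ≥0∞), c ≠ ⊤ →
      (∫⁻ x, (c * f x) ^ p ∂μ) ^ (1 / p) = c * (∫⁻ x, f x ^ p ∂μ) ^ (1 / p) := by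
    intro f c hc
    simp_rw [ENNReal.mul_rpow_of_nonneg _ _ hp0.le]
    rw [lintegral_const_mul' _ _ (ENNReal.rpow_ne_top_of_nonneg hp0.le hc),
      ENNReal.mul_rpow_of_nonneg _ _ h1p, ← ENNReal.rpow_mul, mul_one_div_cancel hp0.ne',
      ENNReal.rpow_one]
  constructor
  · -- lower bound with c = 1
    rw [ENNReal.ofReal_one, one_mul]
    refine le_iInf fun gh => ?_
    obtain ⟨⟨g, h⟩, heq, hg, hh⟩ := gh
    have hgm : AEMeasurable (fun x => ENNReal.ofReal ‖g x‖) μ :=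
      hg.norm.aemeasurable.ennreal_ofReal
    have hhm : AEMeasurable (fun x => ENNReal.ofReal t * ENNReal.ofReal ‖h x‖) μ :=
      (hh.norm.aemeasurable.ennreal_ofReal).const_mul _
    have step1 : I ≤ (∫⁻ x,
        (ENNReal.ofReal ‖g x‖ + ENNReal.ofReal t * ENNReal.ofReal ‖h x‖) ^ p ∂μ) ^ (1 / p) := by
      rw [hI]
      refine ENNReal.rpow_le_rpow (lintegral_mono fun x => ?_) h1p
      exact ENNReal.rpow_le_rpow (KptAux_le ι₀ ι₁ t _ ⟨(g x, h x), heq x⟩) hp0.le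
    refine step1.trans ?_
    refine (ENNReal.lintegral_Lp_add_le hgm hhm hp).trans_eq ?_
    rw [hmulpull (fun x => ENNReal.ofReal ‖h x‖) (ENNReal.ofReal t) ENNReal.ofReal_ne_top]
  · -- upper bound with C = 2
    refine ENNReal.le_of_forall_pos_le_add fun ε hε _ => ?_
    have hUm : MeasurableSet (⋃ i, S i) := MeasurableSet.iUnion hSm
    set M : ℝ≥0∞ := μ (⋃ i, S i) ^ (1 / p) with hM
    have hUfin : μ (⋃ i, S i) ≠ ⊤ := by
      refine (lt_of_le_of_lt (measure_iUnion_fintype_le μ S) ?_).ne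
      exact ENNReal.sum_lt_top.2 fun i _ => hSfin i
    have hMtop : M ≠ ⊤ := ENNReal.rpow_ne_top_of_nonneg h1p hUfin
    have hMt : (0:ℝ) ≤ M.toReal := ENNReal.toReal_nonneg
    set δ : ℝ := (ε : ℝ) / (2 * (M.toReal + 1)) with hδdef
    have hδ : 0 < δ := by
      refine div_pos ?_ (by positivity)
      exact_mod_cast hε
    choose d hd using fun i => KptAux_exists_lt ι₀ ι₁ t (a i) hδ
    set g : X → A₀ := simpleFn n S (fun i => (d i).val.1) with hgdef
    set h : X → A₁ := simpleFn n S (fun i => (d i).val.2) with hhdef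
    have heq : ∀ x, ι₀ (g x) + ι₁ (h x) = ι₀ (simpleFn n S a x) := by
      intro x
      rw [hgdef, hhdef, map_simpleFn, map_simpleFn, map_simpleFn, ← simpleFn_add]
      have : (fun i => ι₀ (d i).val.1 + ι₁ (d i).val.2) = fun i => ι₀ (a i) :=
        funext fun i => (d i).2
      rw [this]
    set G : X → ℝ≥0∞ := simpleFn n S (fun i => KptAux ι₀ ι₁ t (a i)) with hGdef
    set ind : X → ℝ≥0∞ := (⋃ i, S i).indicator (fun _ => ENNReal.ofReal δ) with hinddef
    have hGm : Measurable G := simpleFn_measurable_ennreal hSm _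
    have hindm : Measurable ind := measurable_const.indicator hUm
    have hGI : (∫⁻ x, G x ^ p ∂μ) ^ (1 / p) = I := by
      rw [hI]
      congr 1
      refine lintegral_congr fun x => ?_
      congr 1
      by_cases hx : x ∈ ⋃ i, S i
      · obtain ⟨i, hi⟩ := Set.mem_iUnion.1 hx
        rw [hGdef, simpleFn_apply_of_mem hdisj _ hi, simpleFn_apply_of_mem hdisj a hi]
      · rw [hGdef, simpleFn_apply_of_not_mem _ hx, simpleFn_apply_of_not_mem a hx, KptAux_zero]
    have hindI : (∫⁻ x, ind x ^ p ∂μ) ^ (1 / p) = ENNReal.ofReal δ * M := by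
      have hptw : (fun x => ind x ^ p)
          = (⋃ i, S i).indicator (fun _ => ENNReal.ofReal δ ^ p) := by
        funext x
        rw [hinddef]
        by_cases hx : x ∈ ⋃ i, S i <;>
          simp [hx, ENNReal.zero_rpow_of_pos hp0]
      rw [show (∫⁻ x, ind x ^ p ∂μ) = ∫⁻ x, (⋃ i, S i).indicator
          (fun _ => ENNReal.ofReal δ ^ p) x ∂μ from lintegral_congr fun x => congrFun hptw x,
        lintegral_indicator hUm, setLIntegral_const, ENNReal.mul_rpow_of_nonneg _ _ h1p,
        ← ENNReal.rpow_mul, mul_one_div_cancel hp0.ne', ENNReal.rpow_one, hM]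
    have hgpt : ∀ x, ENNReal.ofReal ‖g x‖ ≤ G x + ind x := by
      intro x
      by_cases hx : x ∈ ⋃ i, S i
      · obtain ⟨i, hi⟩ := Set.mem_iUnion.1 hx
        rw [hgdef, simpleFn_apply_of_mem hdisj _ hi, hGdef, simpleFn_apply_of_mem hdisj _ hi,
          hinddef, Set.indicator_of_mem hx]
        exact le_trans (self_le_add_right _ _) (hd i).le
      · rw [hgdef, simpleFn_apply_of_not_mem _ hx]
        simp
    have hhpt : ∀ x, ENNReal.ofReal t * ENNReal.ofReal ‖h x‖ ≤ G x + ind x := by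
      intro x
      by_cases hx : x ∈ ⋃ i, S i
      · obtain ⟨i, hi⟩ := Set.mem_iUnion.1 hx
        rw [hhdef, simpleFn_apply_of_mem hdisj _ hi, hGdef, simpleFn_apply_of_mem hdisj _ hi,
          hinddef, Set.indicator_of_mem hx]
        exact le_trans (self_le_add_left _ _) (hd i).le
      · rw [hhdef, simpleFn_apply_of_not_mem _ hx]
        simp
    have key : (∫⁻ x, (G x + ind x) ^ p ∂μ) ^ (1 / p) ≤ I + ENNReal.ofReal δ * M := by
      refine (ENNReal.lintegral_Lp_add_le hGm.aemeasurable hindm.aemeasurable hp).trans_eq ?_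
      rw [hGI, hindI]
    have h1 : (∫⁻ x, ENNReal.ofReal ‖g x‖ ^ p ∂μ) ^ (1 / p) ≤ I + ENNReal.ofReal δ * M :=
      le_trans (ENNReal.rpow_le_rpow
        (lintegral_mono fun x => ENNReal.rpow_le_rpow (hgpt x) hp0.le) h1p) key
    have h2 : ENNReal.ofReal t * (∫⁻ x, ENNReal.ofReal ‖h x‖ ^ p ∂μ) ^ (1 / p)
        ≤ I + ENNReal.ofReal δ * M := by
      rw [← hmulpull _ _ ENNReal.ofReal_ne_top]
      exact le_trans (ENNReal.rpow_le_rpow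
        (lintegral_mono fun x => ENNReal.rpow_le_rpow (hhpt x) hp0.le) h1p) key
    have hδM : 2 * (ENNReal.ofReal δ * M) ≤ (ε : ℝ≥0∞) := by
      have hMle : M ≤ ENNReal.ofReal (M.toReal + 1) :=
        le_trans (ENNReal.ofReal_toReal hMtop).ge
          (ENNReal.ofReal_le_ofReal (by linarith [hMt]))
      have hne : M.toReal + 1 ≠ 0 := by positivity
      calc 2 * (ENNReal.ofReal δ * M)
          ≤ 2 * (ENNReal.ofReal δ * ENNReal.ofReal (M.toReal + 1)) := by gcongr
        _ = 2 * ENNReal.ofReal (δ * (M.toReal + 1)) := by rw [ENNReal.ofReal_mul hδ.le]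
        _ = 2 * ENNReal.ofReal ((ε : ℝ) / 2) := by
            congr 1
            rw [hδdef]
            field_simp
        _ = ENNReal.ofReal (2 * ((ε : ℝ) / 2)) := by
            rw [ENNReal.ofReal_mul (by norm_num : (0:ℝ) ≤ 2), ENNReal.ofReal_ofNat]
        _ = (ε : ℝ≥0∞) := by
            rw [mul_div_cancel₀ _ (by norm_num : (2:ℝ) ≠ 0), ENNReal.ofReal_coe_nnreal]
    have final : (∫⁻ x, ENNReal.ofReal ‖g x‖ ^ p ∂μ) ^ (1 / p)
        + ENNReal.ofReal t * (∫⁻ x, ENNReal.ofReal ‖h x‖ ^ p ∂μ) ^ (1 / p)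
        ≤ ENNReal.ofReal 2 * I + (ε : ℝ≥0∞) := by
      calc (∫⁻ x, ENNReal.ofReal ‖g x‖ ^ p ∂μ) ^ (1 / p)
          + ENNReal.ofReal t * (∫⁻ x, ENNReal.ofReal ‖h x‖ ^ p ∂μ) ^ (1 / p)
          ≤ (I + ENNReal.ofReal δ * M) + (I + ENNReal.ofReal δ * M) := add_le_add h1 h2
        _ = 2 * I + 2 * (ENNReal.ofReal δ * M) := by rw [add_add_add_comm, ← two_mul, ← two_mul]
        _ ≤ 2 * I + (ε : ℝ≥0∞) := add_le_add_right hδM _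
        _ = ENNReal.ofReal 2 * I + (ε : ℝ≥0∞) := by rw [ENNReal.ofReal_ofNat]
    have hgsm : AEStronglyMeasurable g μ :=
      (simpleFn_stronglyMeasurable hSm (fun i => (d i).val.1)).aestronglyMeasurable
    have hhsm : AEStronglyMeasurable h μ :=
      (simpleFn_stronglyMeasurable hSm (fun i => (d i).val.2)).aestronglyMeasurable
    refine le_trans (iInf_le _ ⟨(g, h), heq, hgsm, hhsm⟩) ?_
    exact final
end
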